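/- arXiv:2008.09032 — 8 statements merged into one kernel-verified Lean document; each statement's English description precedes it below -/
import Mathlib

section
/- If x, y ∈ ℂ^d and the inner product ⟨x, y⟩ = y* x is real and nonnegative, then ‖x x* − y y*‖_F² ≥ (1/2)·‖x‖_2²·‖x − y‖_2². -/
open Matrix BigOperators
open scoped ComplexOrder

noncomputable section

/-- The measurement map 𝒜(X) = (aᵢ* X aᵢ)ᵢ (real part; real for Hermitian X). -/
def calA {d m : ℕ} (a : Fin m → Fin d → ℂ) (X : Matrix (Fin d) (Fin d) ℂ) : Fin m → ℝ :=
  fun i => (star (a i) ⬝ᵥ X.mulVec (a i)).re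

/-- ℓ2 norm of a real vector. -/
def l2 {m : ℕ} (v : Fin m → ℝ) : ℝ := Real.sqrt (∑ i, (v i) ^ 2)

/-- Entrywise ℓ1 norm of a complex matrix. -/
def matL1 {d : ℕ} (X : Matrix (Fin d) (Fin d) ℂ) : ℝ := ∑ i, ∑ j, ‖X i j‖

/-- Frobenius norm of a complex matrix. -/
def frob {d : ℕ} (X : Matrix (Fin d) (Fin d) ℂ) : ℝ :=
  Real.sqrt (∑ i, ∑ j, ‖X i j‖ ^ 2)

/-- ℓ1 norm of a complex vector. -/
def vecL1 {d : ℕ} (x : Fin d → ℂ) : ℝ := ∑ j, ‖x j‖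

/-- ℓ2 norm of a complex vector. -/
def vecL2 {d : ℕ} (x : Fin d → ℂ) : ℝ := Real.sqrt (∑ j, ‖x j‖ ^ 2)

/-- Number of nonzero entries of a complex vector. -/
def vecL0 {d : ℕ} (x : Fin d → ℂ) : ℕ := (Finset.univ.filter fun j => x j ≠ 0).card

/-- Lemma 2.2: if ⟨x,y⟩ = y*x is real nonnegative then
    ‖xx* − yy*‖_F² ≥ (1/2)‖x‖₂²‖x−y‖₂². -/
theorem rank_one_diff_lower_bound {d : ℕ} (x y : Fin d → ℂ)
    (him : (∑ j, (starRingEnd ℂ) (y j) * x j).im = 0)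
    (hre : 0 ≤ (∑ j, (starRingEnd ℂ) (y j) * x j).re) :
    (1/2) * (vecL2 x) ^ 2 * (vecL2 (x - y)) ^ 2 ≤
      (frob (vecMulVec x (star x) - vecMulVec y (star y))) ^ 2 := by
  set S : ℂ := ∑ j, (starRingEnd ℂ) (y j) * x j with hS
  set a : ℝ := ∑ j, Complex.normSq (x j) with ha
  set b : ℝ := ∑ j, Complex.normSq (y j) with hb
  set c : ℝ := S.re with hc
  have ha0 : 0 ≤ a := Finset.sum_nonneg fun j _ => Complex.normSq_nonneg _
  have hb0 : 0 ≤ b := Finset.sum_nonneg fun j _ => Complex.normSq_nonneg _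
  -- vecL2 x ^ 2 = a
  have hx2 : (vecL2 x) ^ 2 = a := by
    rw [vecL2, Real.sq_sqrt (Finset.sum_nonneg fun j _ => sq_nonneg _)]
    exact Finset.sum_congr rfl fun j _ => Complex.sq_norm _
  -- vecL2 (x-y) ^ 2 = a + b - 2c
  have hxy2 : (vecL2 (x - y)) ^ 2 = a + b - 2 * c := by
    rw [vecL2, Real.sq_sqrt (Finset.sum_nonneg fun j _ => sq_nonneg _)]
    have : ∀ j, ‖(x - y) j‖ ^ 2
        = Complex.normSq (x j) + Complex.normSq (y j)
          - 2 * ((starRingEnd ℂ) (y j) * x j).re := by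
      intro j
      rw [Pi.sub_apply, Complex.sq_norm, Complex.normSq_sub]
      congr 2
      rw [mul_comm]
    simp only [this, Finset.sum_sub_distrib, Finset.sum_add_distrib, ← Finset.mul_sum]
    rw [hc, hS, Complex.re_sum]
  -- cross sum
  have hu : (∑ j, (starRingEnd ℂ) (x j) * y j) = (starRingEnd ℂ) S := by
    rw [hS, map_sum]
    refine Finset.sum_congr rfl fun j _ => ?_
    rw [_root_.map_mul, Complex.conj_conj]; ring
  have hcross : (∑ i, ∑ j, (((starRingEnd ℂ) (y i) * x i) * ((starRingEnd ℂ) (x j) * y j)).re)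
      = c ^ 2 := by
    have h1 : (∑ i, ∑ j, (((starRingEnd ℂ) (y i) * x i) * ((starRingEnd ℂ) (x j) * y j)))
        = S * (starRingEnd ℂ) S := by
      rw [← hu, hS, Finset.sum_mul_sum]
    calc (∑ i, ∑ j, (((starRingEnd ℂ) (y i) * x i) * ((starRingEnd ℂ) (x j) * y j)).re)
        = (∑ i, ∑ j, (((starRingEnd ℂ) (y i) * x i) * ((starRingEnd ℂ) (x j) * y j))).re := by
          simp [Complex.re_sum]
      _ = (S * (starRingEnd ℂ) S).re := by rw [h1]
      _ = c ^ 2 := by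
          rw [Complex.mul_conj]; simp [Complex.normSq_apply, him, hc]; ring
  -- frobenius norm squared
  have hf2 : (frob (vecMulVec x (star x) - vecMulVec y (star y))) ^ 2
      = a * a + b * b - 2 * c ^ 2 := by
    rw [frob, Real.sq_sqrt (Finset.sum_nonneg fun i _ =>
      Finset.sum_nonneg fun j _ => sq_nonneg _)]
    have hterm : ∀ i j : Fin d,
        ‖(vecMulVec x (star x) - vecMulVec y (star y)) i j‖ ^ 2
        = Complex.normSq (x i) * Complex.normSq (x j)
          + Complex.normSq (y i) * Complex.normSq (y j)
          - 2 * (((starRingEnd ℂ) (y i) * x i) * ((starRingEnd ℂ) (x j) * y j)).re := by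
      intro i j
      have hrw : (x i * star x j) * (starRingEnd ℂ) (y i * star y j)
          = ((starRingEnd ℂ) (y i) * x i) * ((starRingEnd ℂ) (x j) * y j) := by
        simp only [Pi.star_apply, Complex.star_def, _root_.map_mul, Complex.conj_conj]
        ring
      rw [Matrix.sub_apply, Complex.sq_norm, vecMulVec_apply, vecMulVec_apply,
        Complex.normSq_sub, hrw]
      simp only [Pi.star_apply, Complex.star_def, Complex.normSq_mul, Complex.normSq_conj]
    simp only [hterm, Finset.sum_sub_distrib, Finset.sum_add_distrib, ← Finset.mul_sum,
      ← Finset.sum_mul]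
    rw [hcross, ha, hb]
  rw [hx2, hxy2, hf2]
  have hM : 0 ≤ a + b - 2 * c := by rw [← hxy2]; positivity
  nlinarith [mul_nonneg hre (sq_nonneg (a - b)), mul_nonneg hM (sq_nonneg (2*a - b)),
    mul_nonneg (mul_nonneg hre hM) (add_nonneg ha0 hb0), sq_nonneg (a - b),
    mul_nonneg hM (sq_nonneg b), mul_nonneg ha0 hb0, mul_nonneg hre hM]
end
end

section
/- Let X, Y ∈ ℂ^{d×d} be Hermitian positive semidefinite with Tr(XY) = 0, let λ ≥ 0, and suppose rank(X) = r with r ≥ 1. Then ‖λ(I − X/‖X‖_F) − Y‖_F ≥ λ(√r − 1). -/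
open Matrix BigOperators
open scoped ComplexOrder

noncomputable section

private lemma trace_re_eq {d : ℕ} (M N : Matrix (Fin d) (Fin d) ℂ) :
    ((Mᴴ * N).trace).re = ∑ i, ∑ j, (star (M i j) * N i j).re := by
  rw [Matrix.trace]
  simp only [Matrix.diag_apply, Matrix.mul_apply, Matrix.conjTranspose_apply, Complex.re_sum]
  rw [Finset.sum_comm]

private lemma re_trace_le_frob_mul_frob {d : ℕ} (M N : Matrix (Fin d) (Fin d) ℂ) :
    ((Mᴴ * N).trace).re ≤ frob M * frob N := by
  rw [trace_re_eq]
  calc ∑ i, ∑ j, (star (M i j) * N i j).re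
      ≤ ∑ i, ∑ j, ‖M i j‖ * ‖N i j‖ := by
        refine Finset.sum_le_sum fun i _ => Finset.sum_le_sum fun j _ => ?_
        refine (Complex.re_le_norm _).trans (le_of_eq ?_)
        simp [Complex.star_def, _root_.map_mul]
    _ = ∑ p : Fin d × Fin d, ‖M p.1 p.2‖ * ‖N p.1 p.2‖ :=
        (Fintype.sum_prod_type
          (f := fun p : Fin d × Fin d => ‖M p.1 p.2‖ * ‖N p.1 p.2‖)).symm
    _ ≤ Real.sqrt (∑ p : Fin d × Fin d, ‖M p.1 p.2‖ ^ 2) *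
        Real.sqrt (∑ p : Fin d × Fin d, ‖N p.1 p.2‖ ^ 2) :=
        Real.sum_mul_le_sqrt_mul_sqrt _ _ _
    _ = frob M * frob N := by unfold frob; rw [Fintype.sum_prod_type, Fintype.sum_prod_type]

private lemma frob_eq_sqrt_re_trace {d : ℕ} (M : Matrix (Fin d) (Fin d) ℂ) :
    frob M = Real.sqrt ((Mᴴ * M).trace.re) := by
  unfold frob
  rw [trace_re_eq]
  congr 1
  refine Finset.sum_congr rfl fun i _ => Finset.sum_congr rfl fun j _ => ?_
  rw [Complex.star_def, ← Complex.normSq_eq_conj_mul_self, Complex.sq_norm, Complex.ofReal_re]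

private lemma frob_pos {d : ℕ} {M : Matrix (Fin d) (Fin d) ℂ} (h : M ≠ 0) : 0 < frob M := by
  unfold frob
  apply Real.sqrt_pos.mpr
  obtain ⟨i, j, hij⟩ : ∃ i j, M i j ≠ 0 := by
    by_contra h'
    push_neg at h'
    exact h (by ext i j; simpa using h' i j)
  have h1 : 0 < ‖M i j‖ ^ 2 := by
    have := norm_pos_iff.mpr hij
    positivity
  refine lt_of_lt_of_le h1 ?_
  refine le_trans (Finset.single_le_sum (f := fun j => ‖M i j‖ ^ 2)
    (fun _ _ => by positivity) (Finset.mem_univ j)) ?_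
  exact Finset.single_le_sum (f := fun i => ∑ j, ‖M i j‖ ^ 2)
    (fun _ _ => Finset.sum_nonneg fun _ _ => by positivity) (Finset.mem_univ i)

private lemma trace_diagonal_mul' {d : ℕ} (v : Fin d → ℂ) (M : Matrix (Fin d) (Fin d) ℂ) :
    (Matrix.diagonal v * M).trace = ∑ i, v i * M i i := by
  simp [Matrix.trace, Matrix.diag, Matrix.diagonal_mul]


/-- Lemma 2.3: if X, Y ⪰ 0, Tr(XY) = 0 and rank X = r ≥ 1, then
    ‖λ(I − X/‖X‖_F) − Y‖_F ≥ λ(√r − 1). -/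
theorem psd_orthogonal_lower_bound {d : ℕ} (X Y : Matrix (Fin d) (Fin d) ℂ)
    (hX : X.PosSemidef) (hY : Y.PosSemidef) (htr : (X * Y).trace = 0)
    (lam : ℝ) (hlam : 0 ≤ lam) (r : ℕ) (hr : X.rank = r) (hr1 : 1 ≤ r) :
    lam * (Real.sqrt r - 1) ≤
      frob ((lam : ℂ) • ((1 : Matrix (Fin d) (Fin d) ℂ) - (frob X : ℂ)⁻¹ • X) - Y) := by
  classical
  have hH := hX.1
  set μ : Fin d → ℝ := hH.eigenvalues with hμ
  have hμ0 : ∀ i, 0 ≤ μ i := fun i => hX.eigenvalues_nonneg i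
  set U : Matrix (Fin d) (Fin d) ℂ := (hH.eigenvectorUnitary : Matrix (Fin d) (Fin d) ℂ)
    with hUdef
  have hU1 : U * Uᴴ = 1 := by
    rw [← Matrix.star_eq_conjTranspose]
    exact Matrix.mem_unitaryGroup_iff.mp hH.eigenvectorUnitary.2
  have hU2 : Uᴴ * U = 1 := by
    rw [← Matrix.star_eq_conjTranspose]
    exact Matrix.mem_unitaryGroup_iff'.mp hH.eigenvectorUnitary.2
  have hspec : Uᴴ * X * U = Matrix.diagonal (fun i => (μ i : ℂ)) := by
    rw [← Matrix.star_eq_conjTranspose]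
    have := hH.conjStarAlgAut_star_eigenvectorUnitary
    rw [Unitary.conjStarAlgAut_star_apply] at this
    exact this
  have hXs : X = U * Matrix.diagonal (fun i => (μ i : ℂ)) * Uᴴ := by
    rw [← Matrix.star_eq_conjTranspose]
    exact hH.spectral_theorem
  -- generic trace computation
  have key : ∀ (v : Fin d → ℂ) (B : Matrix (Fin d) (Fin d) ℂ),
      ((U * Matrix.diagonal v * Uᴴ) * B).trace = ∑ i, v i * (Uᴴ * B * U) i i := by
    intro v B
    have h1 : ((U * Matrix.diagonal v * Uᴴ) * B).trace
        = (Matrix.diagonal v * (Uᴴ * B * U)).trace := by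
      simp only [Matrix.mul_assoc]
      rw [Matrix.trace_mul_comm]
      simp only [Matrix.mul_assoc]
    rw [h1, trace_diagonal_mul']
  set N : Matrix (Fin d) (Fin d) ℂ := Uᴴ * Y * U with hNdef
  have hNP : N.PosSemidef := hY.conjTranspose_mul_mul_same U
  set ν : Fin d → ℝ := fun i => (N i i).re with hν
  have hν0 : ∀ i, 0 ≤ ν i := by
    intro i
    have h0 : (0 : ℂ) ≤ star (Pi.single i 1) ⬝ᵥ N *ᵥ (Pi.single i 1) := hNP.dotProduct_mulVec_nonneg _
    have he : star (Pi.single i 1 : Fin d → ℂ) ⬝ᵥ N *ᵥ (Pi.single i 1) = N i i := by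
      simp [Matrix.mulVec_single, dotProduct, Pi.single_apply, apply_ite]
    rw [he, Complex.le_def] at h0
    exact h0.1
  have hνeq : ∀ i, N i i = ((ν i : ℝ) : ℂ) := by
    intro i
    have h0 : (0 : ℂ) ≤ star (Pi.single i 1) ⬝ᵥ N *ᵥ (Pi.single i 1) := hNP.dotProduct_mulVec_nonneg _
    have he : star (Pi.single i 1 : Fin d → ℂ) ⬝ᵥ N *ᵥ (Pi.single i 1) = N i i := by
      simp [Matrix.mulVec_single, dotProduct, Pi.single_apply, apply_ite]
    rw [he, Complex.le_def] at h0
    exact Complex.ext (by simp [hν]) (by simp [← h0.2])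
  have hXY : ∀ i, μ i ≠ 0 → ν i = 0 := by
    have h1 : (X * Y).trace = ∑ i, (μ i : ℂ) * N i i := by
      conv_lhs => rw [hXs]
      rw [key]
    have h2 : ∑ i, μ i * ν i = 0 := by
      have h2c : (∑ i, ((μ i * ν i : ℝ) : ℂ)) = 0 := by
        rw [← htr, h1]
        refine Finset.sum_congr rfl fun i _ => ?_
        rw [hνeq i]
        push_cast
        ring
      rw [← Complex.ofReal_sum] at h2c
      exact_mod_cast h2c
    intro i hi
    have h3 := (Finset.sum_eq_zero_iff_of_nonneg
      (fun j _ => mul_nonneg (hμ0 j) (hν0 j))).mp h2 i (Finset.mem_univ i)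
    rcases mul_eq_zero.mp h3 with h | h
    · exact absurd h hi
    · exact h
  set d1 : Fin d → ℂ := fun i => if μ i = 0 then 0 else 1 with hd1
  set P : Matrix (Fin d) (Fin d) ℂ := U * Matrix.diagonal d1 * Uᴴ with hPdef
  have hcard : ∑ i, d1 i = ((r : ℕ) : ℂ) := by
    have hb : ∑ i, d1 i = ∑ i, (if μ i ≠ 0 then (1 : ℂ) else 0) := by
      refine Finset.sum_congr rfl fun i _ => ?_
      by_cases h : μ i = 0 <;> simp [hd1, h]
    rw [hb, Finset.sum_boole]
    congr 1
    have hrk := hH.rank_eq_card_non_zero_eigs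
    rw [hr, Fintype.card_subtype] at hrk
    exact_mod_cast hrk.symm
  have hPX : (P * X).trace = ((∑ i, μ i : ℝ) : ℂ) := by
    rw [hPdef, key, hspec]
    push_cast
    refine Finset.sum_congr rfl fun i _ => ?_
    rw [Matrix.diagonal_apply_eq]
    by_cases h : μ i = 0 <;> simp [hd1, h]
  have hPY : ((P * Y).trace).re = 0 := by
    rw [hPdef, key, ← hNdef, Complex.re_sum]
    refine Finset.sum_eq_zero fun i _ => ?_
    by_cases h : μ i = 0
    · simp [hd1, h]
    · simp [hd1, h, hνeq i, hXY i h]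
  have hP : P.trace = ((r : ℕ) : ℂ) := by
    have h0 : P.trace = (P * 1).trace := by rw [Matrix.mul_one]
    rw [h0, hPdef, key, Matrix.mul_one, hU2]
    rw [← hcard]
    refine Finset.sum_congr rfl fun i _ => ?_
    rw [Matrix.one_apply_eq, mul_one]
  have hPP : (P * P).trace = ((r : ℕ) : ℂ) := by
    rw [hPdef, key]
    have hUPU : Uᴴ * (U * Matrix.diagonal d1 * Uᴴ) * U = Matrix.diagonal d1 := by
      simp only [← Matrix.mul_assoc]
      rw [hU2, Matrix.one_mul, Matrix.mul_assoc, hU2, Matrix.mul_one]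
    rw [hUPU, ← hcard]
    refine Finset.sum_congr rfl fun i _ => ?_
    rw [Matrix.diagonal_apply_eq]
    by_cases h : μ i = 0 <;> simp [hd1, h]
  have hPherm : Pᴴ = P := by
    have hD : (Matrix.diagonal d1)ᴴ = Matrix.diagonal d1 := by
      have hsd : star d1 = d1 := by
        funext i
        by_cases h : μ i = 0 <;> simp [hd1, h]
      rw [Matrix.diagonal_conjTranspose, hsd]
    rw [hPdef]
    simp only [Matrix.conjTranspose_mul, Matrix.conjTranspose_conjTranspose, hD,
      Matrix.mul_assoc]
  have hfrobP : frob P = Real.sqrt r := by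
    rw [frob_eq_sqrt_re_trace, hPherm, hPP]
    simp
  set T : ℝ := ∑ i, μ i with hT
  have hs : 0 < frob X := by
    refine frob_pos fun h0 => ?_
    rw [h0, Matrix.rank_zero] at hr
    omega
  set s : ℝ := frob X with hsdef
  have hTle : T ≤ Real.sqrt r * s := by
    have h := re_trace_le_frob_mul_frob P X
    rw [hPherm, hPX, hfrobP, Complex.ofReal_re] at h
    exact h
  set Z : Matrix (Fin d) (Fin d) ℂ :=
    (lam : ℂ) • ((1 : Matrix (Fin d) (Fin d) ℂ) - ((s : ℝ) : ℂ)⁻¹ • X) - Y with hZ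
  have htrZ : ((P * Z).trace).re = lam * ((r : ℝ) - s⁻¹ * T) := by
    have hexp : P * Z = (lam : ℂ) • (P - ((s : ℝ) : ℂ)⁻¹ • (P * X)) - P * Y := by
      rw [hZ]
      simp [Matrix.mul_sub, Matrix.mul_smul, Matrix.mul_one]
    rw [hexp, Matrix.trace_sub, Matrix.trace_smul, Matrix.trace_sub, Matrix.trace_smul,
      hP, hPX, Complex.sub_re]
    have hre : ((lam : ℂ) • (((r : ℕ) : ℂ) - ((s : ℝ) : ℂ)⁻¹ • ((T : ℝ) : ℂ)))
        = ((lam * ((r : ℝ) - s⁻¹ * T) : ℝ) : ℂ) := by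
      simp only [smul_eq_mul]
      push_cast
      ring
    rw [hre, Complex.ofReal_re, hPY, sub_zero]
  have hmain := re_trace_le_frob_mul_frob P Z
  rw [hPherm, hfrobP, htrZ] at hmain
  have hsr : (0 : ℝ) < Real.sqrt r := Real.sqrt_pos.mpr (by exact_mod_cast hr1)
  have hstep : lam * ((r : ℝ) - Real.sqrt r) ≤ lam * ((r : ℝ) - s⁻¹ * T) := by
    refine mul_le_mul_of_nonneg_left (sub_le_sub_left ?_ _) hlam
    calc s⁻¹ * T ≤ s⁻¹ * (Real.sqrt r * s) :=
          mul_le_mul_of_nonneg_left hTle (inv_nonneg.mpr hs.le)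
      _ = Real.sqrt r := by field_simp
  have heq : lam * (Real.sqrt r - 1) * Real.sqrt r = lam * ((r : ℝ) - Real.sqrt r) := by
    have h := Real.mul_self_sqrt (Nat.cast_nonneg r : (0 : ℝ) ≤ (r : ℝ))
    calc lam * (Real.sqrt r - 1) * Real.sqrt r
        = lam * (Real.sqrt r * Real.sqrt r - Real.sqrt r) := by ring
      _ = lam * ((r : ℝ) - Real.sqrt r) := by rw [h]
  have hfin : lam * (Real.sqrt r - 1) * Real.sqrt r ≤ frob Z * Real.sqrt r := by
    rw [heq, mul_comm (frob Z)]
    exact hstep.trans hmain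
  exact le_of_mul_le_mul_right hfin hsr
end
end

section
/- Let X, Y ∈ ℂ^{d×d} be Hermitian positive semidefinite with Tr(XY) = 0, let λ ≥ 0, and let r = rank(X). Then ‖λ I − Y‖_F ≥ λ·√r. -/
open Matrix BigOperators
open scoped ComplexOrder

noncomputable section

private lemma trace_re_eq_s5 {m n : Type*} [Fintype m] [Fintype n] [DecidableEq n] (M : Matrix m n ℂ) :
    ((Mᴴ * M).trace).re = ∑ i, ∑ j, ‖M i j‖ ^ 2 := by
  simp only [Matrix.trace, Matrix.mul_apply, Matrix.diag, Matrix.conjTranspose_apply,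
    Complex.re_sum]
  rw [Finset.sum_comm]
  congr 1; ext i; congr 1; ext j
  rw [Complex.star_def, ← Complex.normSq_eq_conj_mul_self, ← Complex.normSq_eq_norm_sq,
    Complex.ofReal_re]

private lemma trace_nonneg_re {m n : Type*} [Fintype m] [Fintype n] [DecidableEq n]
    (M : Matrix m n ℂ) (h : (Mᴴ * M).trace = 0) : M = 0 := by
  have h2 := trace_re_eq_s5 M
  rw [h] at h2
  simp only [Complex.zero_re] at h2
  ext i j
  have := (Finset.sum_eq_zero_iff_of_nonneg (fun i _ => Finset.sum_nonneg
    (fun j _ => by positivity))).mp h2.symm i (Finset.mem_univ i)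
  have := (Finset.sum_eq_zero_iff_of_nonneg (fun j _ => by positivity)).mp this j
    (Finset.mem_univ j)
  simpa using pow_eq_zero_iff (two_ne_zero).elim |>.mp (by simpa using this)

private lemma mul_eq_zero_of_trace {d : ℕ} (X Y : Matrix (Fin d) (Fin d) ℂ)
    (hX : X.PosSemidef) (hY : Y.PosSemidef) (htr : (X * Y).trace = 0) : X * Y = 0 := by
  obtain ⟨A, rfl⟩ : ∃ B : Matrix (Fin d) (Fin d) ℂ, X = Bᴴ * B := by
    open scoped MatrixOrder in exact CStarAlgebra.nonneg_iff_eq_star_mul_self.mp hX.nonneg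
  obtain ⟨B, rfl⟩ : ∃ B : Matrix (Fin d) (Fin d) ℂ, Y = Bᴴ * B := by
    open scoped MatrixOrder in exact CStarAlgebra.nonneg_iff_eq_star_mul_self.mp hY.nonneg
  have hM : B * Aᴴ = 0 := by
    apply trace_nonneg_re
    have : (B * Aᴴ)ᴴ * (B * Aᴴ) = A * (Bᴴ * B) * Aᴴ := by
      simp [Matrix.conjTranspose_mul, Matrix.mul_assoc]
    rw [this, Matrix.trace_mul_cycle]
    rw [← Matrix.mul_assoc] at htr ⊢
    exact htr
  calc Aᴴ * A * (Bᴴ * B) = Aᴴ * (B * Aᴴ)ᴴ * B := by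
        simp [Matrix.conjTranspose_mul, Matrix.mul_assoc]
    _ = 0 := by rw [hM]; simp

private theorem psd_bound_aux {d : ℕ} (X Y : Matrix (Fin d) (Fin d) ℂ)
    (hX : X.PosSemidef) (hY : Y.PosSemidef) (htr : (X * Y).trace = 0)
    (lam : ℝ) (hlam : 0 ≤ lam) (r : ℕ) (hr : X.rank = r) :
    lam * Real.sqrt r ≤ Real.sqrt (∑ i, ∑ j,
      ‖((lam : ℂ) • (1 : Matrix (Fin d) (Fin d) ℂ) - Y) i j‖ ^ 2) := by
  classical
  have hXY : X * Y = 0 := mul_eq_zero_of_trace X Y hX hY htr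
  have hrank : X.rank + Y.rank ≤ d := by
    simpa using Matrix.rank_add_rank_le_card_of_mul_eq_zero hXY
  set μ := hY.1.eigenvalues with hμ
  set U := (Matrix.IsHermitian.eigenvectorUnitary hY.1 : Matrix (Fin d) (Fin d) ℂ) with hU
  have hUmem := (Matrix.IsHermitian.eigenvectorUnitary hY.1).2
  have hUU : star U * U = 1 := (Unitary.mem_iff.mp hUmem).1
  have hUU' : U * star U = 1 := (Unitary.mem_iff.mp hUmem).2
  have key : ((lam:ℂ) • (1 : Matrix (Fin d) (Fin d) ℂ) - Y)
      = U * Matrix.diagonal (fun i => ((lam - μ i : ℝ) : ℂ)) * star U := by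
    have hspec : Y = U * Matrix.diagonal (Complex.ofReal ∘ μ) * star U :=
      hY.1.spectral_theorem
    have h1 : (lam:ℂ) • (1 : Matrix (Fin d) (Fin d) ℂ)
        = U * ((lam:ℂ) • (1 : Matrix (Fin d) (Fin d) ℂ)) * star U := by
      rw [Matrix.mul_smul, Matrix.mul_one, Matrix.smul_mul, hUU']
    rw [h1]
    conv_lhs => rw [hspec]
    rw [← Matrix.sub_mul, ← Matrix.mul_sub]
    congr 2
    rw [← Matrix.diagonal_one, ← Matrix.diagonal_smul, Matrix.diagonal_sub]
    congr 1
    ext i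
    simp [Complex.ofReal_sub]
  have hUUc : Uᴴ * U = 1 := by rw [← Matrix.star_eq_conjTranspose]; exact hUU
  have htr2 : ((((lam:ℂ) • (1 : Matrix (Fin d) (Fin d) ℂ) - Y)ᴴ *
      ((lam:ℂ) • (1 : Matrix (Fin d) (Fin d) ℂ) - Y)).trace).re = ∑ i, (lam - μ i)^2 := by
    rw [key]
    have hmm : (U * Matrix.diagonal (fun i => ((lam - μ i : ℝ) : ℂ)) * star U)ᴴ *
        (U * Matrix.diagonal (fun i => ((lam - μ i : ℝ) : ℂ)) * star U)
        = U * ((Matrix.diagonal (fun i => ((lam - μ i : ℝ) : ℂ)))ᴴ *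
          Matrix.diagonal (fun i => ((lam - μ i : ℝ) : ℂ))) * star U := by
      simp only [Matrix.star_eq_conjTranspose, Matrix.conjTranspose_mul,
        Matrix.conjTranspose_conjTranspose, Matrix.mul_assoc]
      rw [← Matrix.mul_assoc Uᴴ U, hUUc, Matrix.one_mul]
    rw [hmm, Matrix.trace_mul_cycle, Matrix.star_eq_conjTranspose, hUUc, Matrix.one_mul]
    simp only [Matrix.diagonal_conjTranspose, Matrix.diagonal_mul_diagonal,
      Matrix.trace_diagonal, Complex.re_sum, Pi.star_apply, Complex.star_def,
      Complex.conj_ofReal, ← Complex.ofReal_mul, Complex.ofReal_re]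
    exact Finset.sum_congr rfl fun i _ => (pow_two _).symm
  set S := Finset.univ.filter (fun i => μ i = 0) with hS
  have hcardne : Y.rank = (Finset.univ.filter (fun i => μ i ≠ 0)).card := by
    rw [hY.1.rank_eq_card_non_zero_eigs]
    simp [Fintype.card_subtype, hμ]
  have hScard : r ≤ S.card := by
    have hsplit : S.card + (Finset.univ.filter (fun i => μ i ≠ 0)).card = d := by
      simpa using Finset.card_filter_add_card_filter_not
        (s := (Finset.univ : Finset (Fin d))) (p := fun i => μ i = 0)
    omega
  have hsum : (r : ℝ) * lam^2 ≤ ∑ i, (lam - μ i)^2 := by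
    have h1 : ∑ i ∈ S, (lam - μ i)^2 = S.card * lam^2 := by
      rw [Finset.sum_congr rfl (fun i hi => by
        rw [(Finset.mem_filter.mp hi).2, sub_zero])]
      simp [Finset.sum_const, nsmul_eq_mul]
    calc (r:ℝ) * lam^2 ≤ S.card * lam^2 := by
          have : (r:ℝ) ≤ S.card := by exact_mod_cast hScard
          exact mul_le_mul_of_nonneg_right this (sq_nonneg _)
      _ = ∑ i ∈ S, (lam - μ i)^2 := h1.symm
      _ ≤ ∑ i, (lam - μ i)^2 := Finset.sum_le_sum_of_subset_of_nonneg
          (Finset.subset_univ _) (fun i _ _ => sq_nonneg _)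
  have hfr : ∑ i, ∑ j, ‖((lam:ℂ) • (1 : Matrix (Fin d) (Fin d) ℂ) - Y) i j‖^2
      = ∑ i, (lam - μ i)^2 := by
    rw [← trace_re_eq_s5, htr2]
  rw [hfr]
  have heq : lam * Real.sqrt r = Real.sqrt ((r:ℝ) * lam^2) := by
    rw [Real.sqrt_mul (Nat.cast_nonneg r), Real.sqrt_sq hlam, mul_comm]
  rw [heq]
  exact Real.sqrt_le_sqrt hsum

/-- Inner estimate in Lemma 2.3: ‖λI − Y‖_F ≥ λ√r where r = rank X,
    for X, Y ⪰ 0 with Tr(XY) = 0. -/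
theorem psd_orthogonal_identity_bound {d : ℕ} (X Y : Matrix (Fin d) (Fin d) ℂ)
    (hX : X.PosSemidef) (hY : Y.PosSemidef) (htr : (X * Y).trace = 0)
    (lam : ℝ) (hlam : 0 ≤ lam) (r : ℕ) (hr : X.rank = r) :
    lam * Real.sqrt r ≤ frob ((lam : ℂ) • (1 : Matrix (Fin d) (Fin d) ℂ) - Y) := by
  unfold frob
  exact psd_bound_aux X Y hX hY htr lam hlam r hr
end
end

section
/- Let x0 ∈ ℂ^d, w ∈ ℝ^m, b = 𝒜(x0 x0*) + w, and μ > 0. If x# is a global minimizer over ℂ^d of x ↦ μ‖x‖_1² + (1/2)‖𝒜(x x*) − b‖_2², then ‖x#‖_1 ≤ ‖x0‖_1 + ‖w‖_2/√(2μ). -/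
open Matrix BigOperators
open scoped ComplexOrder

noncomputable section

/-- Bound (2.12): ℓ1 norm of the minimizer of the vector model. -/
theorem minimizer_l1_bound {d m : ℕ} (a : Fin m → Fin d → ℂ)
    (x0 : Fin d → ℂ) (w b : Fin m → ℝ)
    (hb : ∀ i, b i = calA a (vecMulVec x0 (star x0)) i + w i)
    (mu : ℝ) (hmu : 0 < mu)
    (xs : Fin d → ℂ)
    (hmin : ∀ x : Fin d → ℂ,
      mu * (vecL1 xs) ^ 2
          + (1/2) * (l2 (fun i => calA a (vecMulVec xs (star xs)) i - b i)) ^ 2 ≤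
      mu * (vecL1 x) ^ 2
          + (1/2) * (l2 (fun i => calA a (vecMulVec x (star x)) i - b i)) ^ 2) :
    vecL1 xs ≤ vecL1 x0 + l2 w / Real.sqrt (2 * mu) := by
  have h0 := hmin x0
  have hL : l2 (fun i => calA a (vecMulVec x0 (star x0)) i - b i) = l2 w := by
    unfold l2
    congr 1
    apply Finset.sum_congr rfl
    intro i _
    simp only [hb i]; ring
  rw [hL] at h0
  have hA : 0 ≤ vecL1 xs := Finset.sum_nonneg fun _ _ => norm_nonneg _
  have hB : 0 ≤ vecL1 x0 := Finset.sum_nonneg fun _ _ => norm_nonneg _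
  have hW : 0 ≤ l2 w := Real.sqrt_nonneg _
  have hLn : 0 ≤ l2 (fun i => calA a (vecMulVec xs (star xs)) i - b i) := Real.sqrt_nonneg _
  have hs : 0 < Real.sqrt (2 * mu) := Real.sqrt_pos.mpr (by linarith)
  have hsq : (Real.sqrt (2 * mu)) ^ 2 = 2 * mu := Real.sq_sqrt (by linarith)
  set A := vecL1 xs
  set B := vecL1 x0
  set W := l2 w
  set t := W / Real.sqrt (2 * mu) with ht
  have htn : 0 ≤ t := div_nonneg hW hs.le
  have ht2 : 2 * mu * t ^ 2 = W ^ 2 := by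
    rw [ht, div_pow, hsq]
    field_simp
  have key : mu * A ^ 2 ≤ mu * B ^ 2 + mu * t ^ 2 := by
    nlinarith [sq_nonneg (l2 (fun i => calA a (vecMulVec xs (star xs)) i - b i))]
  have h2 : A ^ 2 ≤ (B + t) ^ 2 := by nlinarith [mul_nonneg hB htn]
  calc A = Real.sqrt (A ^ 2) := (Real.sqrt_sq hA).symm
    _ ≤ Real.sqrt ((B + t) ^ 2) := Real.sqrt_le_sqrt h2
    _ = B + t := Real.sqrt_sq (by positivity)
end
end

section
/- Let x0 ∈ ℂ^d with ‖x0‖_0 ≤ k and support T0 = {j : (x0)_j ≠ 0}, let w ∈ ℝ^m, b = 𝒜(x0 x0*) + w, and μ > 0. If x# is a global minimizer over ℂ^d of x ↦ μ‖x‖_1² + (1/2)‖𝒜(x x*) − b‖_2², then Σ_{j ∉ T0} |x#_j| ≤ √k · ‖x#_{T0} − x0‖_2 + ‖w‖_2/√(2μ), where x#_{T0} denotes the vector equal to x# on T0 and zero elsewhere. -/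
open Matrix BigOperators
open scoped ComplexOrder

noncomputable section

/-- Bound (3.8): off-support ℓ1 mass of the minimizer. -/
theorem minimizer_offsupport_bound {d m : ℕ} (a : Fin m → Fin d → ℂ)
    (k : ℕ) (x0 : Fin d → ℂ) (hx0 : vecL0 x0 ≤ k)
    (w b : Fin m → ℝ)
    (hb : ∀ i, b i = calA a (vecMulVec x0 (star x0)) i + w i)
    (mu : ℝ) (hmu : 0 < mu)
    (xs : Fin d → ℂ)
    (hmin : ∀ x : Fin d → ℂ,
      mu * (vecL1 xs) ^ 2
          + (1/2) * (l2 (fun i => calA a (vecMulVec xs (star xs)) i - b i)) ^ 2 ≤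
      mu * (vecL1 x) ^ 2
          + (1/2) * (l2 (fun i => calA a (vecMulVec x (star x)) i - b i)) ^ 2) :
    ∑ j ∈ Finset.univ.filter (fun j => x0 j = 0), ‖xs j‖ ≤
      Real.sqrt k * vecL2 (fun j => (if x0 j ≠ 0 then xs j else 0) - x0 j)
        + l2 w / Real.sqrt (2 * mu) := by
  classical
  set T0 : Finset (Fin d) := Finset.univ.filter (fun j => x0 j ≠ 0) with hT0
  set c : ℝ := l2 w / Real.sqrt (2 * mu) with hc
  have hWnn : (0:ℝ) ≤ l2 w := Real.sqrt_nonneg _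
  have hcnn : 0 ≤ c := div_nonneg hWnn (Real.sqrt_nonneg _)
  -- Step 1: compare objective values at xs and x0
  have hres : (fun i => calA a (vecMulVec x0 (star x0)) i - b i) = fun i => -w i := by
    funext i; rw [hb i]; ring
  have hW : l2 (fun i => -(w i)) = l2 w := by
    unfold l2; congr 1; apply Finset.sum_congr rfl; intros; ring
  have h1 := hmin x0
  rw [hres] at h1
  simp only [hW] at h1
  have hnn : 0 ≤ (1/2) * (l2 (fun i => calA a (vecMulVec xs (star xs)) i - b i)) ^ 2 := by
    positivity
  have h2 : mu * (vecL1 xs) ^ 2 ≤ mu * (vecL1 x0) ^ 2 + (1/2) * (l2 w) ^ 2 := by linarith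
  have hsq : Real.sqrt (2 * mu) ^ 2 = 2 * mu := Real.sq_sqrt (by linarith)
  have hc2 : c ^ 2 = (l2 w) ^ 2 / (2 * mu) := by
    rw [hc, div_pow, hsq]
  have hL1s : 0 ≤ vecL1 xs := Finset.sum_nonneg fun _ _ => norm_nonneg _
  have hL10 : 0 ≤ vecL1 x0 := Finset.sum_nonneg fun _ _ => norm_nonneg _
  have h3 : vecL1 xs ≤ vecL1 x0 + c := by
    have hsq2 : (vecL1 xs) ^ 2 ≤ (vecL1 x0 + c) ^ 2 := by
      have : (l2 w) ^ 2 = 2 * mu * c ^ 2 := by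
        rw [hc2]; field_simp
      nlinarith [mul_nonneg hL10 hcnn]
    nlinarith [add_nonneg hL10 hcnn]
  -- Step 2: split the ℓ1 norm of xs over the support of x0
  have hsplit : (∑ j ∈ Finset.univ.filter (fun j => x0 j = 0), ‖xs j‖)
      + (∑ j ∈ T0, ‖xs j‖) = vecL1 xs := by
    rw [hT0]
    have := Finset.sum_filter_add_sum_filter_not Finset.univ (fun j => x0 j = 0)
      (fun j => ‖xs j‖)
    simpa [vecL1] using this
  have hL10eq : vecL1 x0 = ∑ j ∈ T0, ‖x0 j‖ := by
    rw [hT0]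
    unfold vecL1
    refine (Finset.sum_subset (Finset.filter_subset _ _) ?_).symm
    intro j _ hj
    simp only [Finset.mem_filter, Finset.mem_univ, true_and, not_not] at hj
    simp [hj]
  -- Step 3: bound the on-support difference
  have hterm : ∀ j ∈ T0, ‖x0 j‖ - ‖xs j‖
      ≤ ‖xs j - x0 j‖ := by
    intro j _
    have := norm_sub_norm_le (x0 j) (xs j)
    rwa [norm_sub_rev (x0 j) (xs j)] at this
  have h4 : ∑ j ∈ Finset.univ.filter (fun j => x0 j = 0), ‖xs j‖
      ≤ (∑ j ∈ T0, ‖xs j - x0 j‖) + c := by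
    have h5 : (∑ j ∈ T0, ‖x0 j‖) - (∑ j ∈ T0, ‖xs j‖)
        ≤ ∑ j ∈ T0, ‖xs j - x0 j‖ := by
      rw [← Finset.sum_sub_distrib]
      exact Finset.sum_le_sum hterm
    linarith [hsplit, hL10eq ▸ h3]
  -- Step 4: Cauchy–Schwarz on the support
  set S : ℝ := ∑ j ∈ T0, ‖xs j - x0 j‖ with hS
  have hSnn : 0 ≤ S := Finset.sum_nonneg fun _ _ => norm_nonneg _
  have hCS : S ^ 2 ≤ (T0.card : ℝ) * ∑ j ∈ T0, ‖xs j - x0 j‖ ^ 2 := by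
    have := Finset.sum_mul_sq_le_sq_mul_sq T0 (fun _ => (1:ℝ)) (fun j => ‖xs j - x0 j‖)
    simpa [hS] using this
  have hsum_eq : (∑ j ∈ T0, ‖xs j - x0 j‖ ^ 2)
      = ∑ j, ‖(if x0 j ≠ 0 then xs j else 0) - x0 j‖ ^ 2 := by
    have e1 : (∑ j, ‖(if x0 j ≠ 0 then xs j else 0) - x0 j‖ ^ 2)
        = ∑ j ∈ T0, ‖(if x0 j ≠ 0 then xs j else 0) - x0 j‖ ^ 2 := by
      rw [hT0]
      refine (Finset.sum_subset (Finset.filter_subset _ _) ?_).symm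
      intro j _ hj
      simp only [Finset.mem_filter, Finset.mem_univ, true_and, not_not] at hj
      simp [hj]
    rw [e1]
    apply Finset.sum_congr rfl
    intro j hj
    rw [hT0] at hj
    simp only [Finset.mem_filter, Finset.mem_univ, true_and] at hj
    simp [hj]
  have hcard : (T0.card : ℝ) ≤ (k : ℝ) := by
    exact_mod_cast hx0
  have hS_le : S ≤ Real.sqrt k * vecL2 (fun j => (if x0 j ≠ 0 then xs j else 0) - x0 j) := by
    have hsum_nn : 0 ≤ ∑ j ∈ T0, ‖xs j - x0 j‖ ^ 2 :=
      Finset.sum_nonneg fun _ _ => sq_nonneg _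
    have h6 : S ^ 2 ≤ (k : ℝ) * ∑ j ∈ T0, ‖xs j - x0 j‖ ^ 2 :=
      hCS.trans (mul_le_mul_of_nonneg_right hcard hsum_nn)
    have h7 : S ≤ Real.sqrt ((k : ℝ) * ∑ j ∈ T0, ‖xs j - x0 j‖ ^ 2) := by
      rw [← Real.sqrt_sq hSnn]
      exact Real.sqrt_le_sqrt h6
    calc S ≤ Real.sqrt ((k : ℝ) * ∑ j ∈ T0, ‖xs j - x0 j‖ ^ 2) := h7
      _ = Real.sqrt k * Real.sqrt (∑ j ∈ T0, ‖xs j - x0 j‖ ^ 2) := by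
          rw [Real.sqrt_mul (Nat.cast_nonneg k)]
      _ = Real.sqrt k * vecL2 (fun j => (if x0 j ≠ 0 then xs j else 0) - x0 j) := by
          rw [hsum_eq]; rfl
  linarith [h4, hS_le]
end
end

section
/- Let b ∈ ℝ^m, λ ≥ 0 and μ > 0, and let (X^k)_{k≥0} be a DCA sequence for these data. Then for every k ≥ 1, ‖X^k‖_1 ≤ ‖b‖_2²/(2μ); in particular the sequence (X^k) is bounded. -/
open Matrix BigOperators
open scoped ComplexOrder

noncomputable section

/-- Y-update of DCA: Y = X/‖X‖_F if X ≠ 0, else 0. -/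
def dcaY {d : ℕ} (X : Matrix (Fin d) (Fin d) ℂ) : Matrix (Fin d) (Fin d) ℂ :=
  if X = 0 then 0 else (frob X : ℂ)⁻¹ • X

/-- The convex objective minimized at each DCA iteration. -/
def dcaObj {d m : ℕ} (a : Fin m → Fin d → ℂ) (b : Fin m → ℝ) (lam mu : ℝ)
    (Y Z : Matrix (Fin d) (Fin d) ℂ) : ℝ :=
  (1/2) * (l2 (fun i => calA a Z i - b i)) ^ 2 + lam * (Z.trace).re
    - lam * ((Yᴴ * Z).trace).re + mu * matL1 Z

/-- A DCA sequence: X⁰ = 0, all iterates Hermitian PSD, and each X^{k+1} globally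
    minimizes the convex subproblem over the PSD cone. -/
def IsDCASeq {d m : ℕ} (a : Fin m → Fin d → ℂ) (b : Fin m → ℝ) (lam mu : ℝ)
    (X : ℕ → Matrix (Fin d) (Fin d) ℂ) : Prop :=
  X 0 = 0 ∧ (∀ k, (X k).PosSemidef) ∧
  ∀ k, ∀ Z : Matrix (Fin d) (Fin d) ℂ, Z.PosSemidef →
    dcaObj a b lam mu (dcaY (X k)) (X (k + 1)) ≤ dcaObj a b lam mu (dcaY (X k)) Z



section Aux

lemma diag_re_nonneg' {d : ℕ} {Z : Matrix (Fin d) (Fin d) ℂ} (hZ : Z.PosSemidef) (i : Fin d) :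
    0 ≤ (Z i i).re := by
  have h := hZ.re_dotProduct_nonneg (Pi.single i 1)
  simpa [Matrix.mulVec_single, dotProduct, Pi.single_apply, apply_ite,
    Finset.sum_ite_eq'] using h

lemma entry_abs_sq_le' {d : ℕ} {Z : Matrix (Fin d) (Fin d) ℂ} (hZ : Z.PosSemidef) (i j : Fin d) :
    ‖Z i j‖ ^ 2 ≤ (Z i i).re * (Z j j).re := by
  by_cases hij : i = j
  · subst hij
    have him : (Z i i).im = 0 := by
      have h := congrFun (congrFun hZ.1 i) i
      rw [Matrix.conjTranspose_apply] at h
      exact Complex.conj_eq_iff_im.mp h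
    rw [Complex.sq_norm, Complex.normSq_apply, him]
    nlinarith [sq_nonneg (Z i i).re]
  by_cases hz : Z i j = 0
  · rw [hz]
    simpa using mul_nonneg (diag_re_nonneg' hZ i) (diag_re_nonneg' hZ j)
  set r : ℝ := ‖Z i j‖ with hr
  have hrpos : 0 < r := norm_pos_iff.mpr hz
  have hr0 : (r : ℂ) ≠ 0 := by exact_mod_cast hrpos.ne'
  have habs : Z i j * (starRingEnd ℂ) (Z i j) = ((r * r : ℝ) : ℂ) := by
    rw [Complex.mul_conj]
    norm_cast
    rw [hr, Complex.normSq_eq_norm_sq]; ring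
  have key : ∀ t : ℝ, 0 ≤ (Z i i).re * (t * t) + (-(2 * r)) * t + (Z j j).re := by
    intro t
    set c : ℂ := -(t : ℂ) * (Z i j / r) with hc
    set x : Fin d → ℂ := fun s => (if s = i then c else 0) + (if s = j then 1 else 0) with hx
    have h := hZ.re_dotProduct_nonneg x
    have hji : Z j i = starRingEnd ℂ (Z i j) := by
      have h2 := congrFun (congrFun hZ.1 j) i
      rw [Matrix.conjTranspose_apply] at h2
      exact h2.symm
    have hQ : star x ⬝ᵥ Z.mulVec x
        = (starRingEnd ℂ) c * c * Z i i + (starRingEnd ℂ) c * Z i j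
          + c * (starRingEnd ℂ) (Z i j) + Z j j := by
      simp only [hx, dotProduct, Matrix.mulVec, Pi.star_apply, star_add,
        apply_ite (star : ℂ → ℂ), star_zero, star_one, mul_add, add_mul, Finset.mul_sum,
        Finset.sum_mul, mul_ite, ite_mul, zero_mul, mul_zero, Finset.sum_add_distrib,
        Finset.sum_ite_eq', Finset.mem_univ, if_true, Complex.star_def]
      rw [hji]
      ring
    have hcc : (starRingEnd ℂ) c * c = ((t * t : ℝ) : ℂ) := by
      rw [hc, _root_.map_mul, map_neg, Complex.conj_ofReal, map_div₀, Complex.conj_ofReal]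
      field_simp
      linear_combination (norm := (push_cast; ring)) (t : ℂ) * (t : ℂ) * habs
    have h1 : (starRingEnd ℂ) c * Z i j = ((-(t * r) : ℝ) : ℂ) := by
      rw [hc, _root_.map_mul, map_neg, Complex.conj_ofReal, map_div₀, Complex.conj_ofReal]
      field_simp
      linear_combination (norm := (push_cast; ring)) -(t : ℂ) * habs
    have h2 : c * (starRingEnd ℂ) (Z i j) = ((-(t * r) : ℝ) : ℂ) := by
      rw [hc]
      field_simp
      linear_combination (norm := (push_cast; ring)) -(t : ℂ) * habs
    rw [RCLike.re_to_complex] at h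
    rw [hQ, hcc, h1, h2] at h
    simp only [Complex.add_re, Complex.mul_re, Complex.ofReal_re, Complex.ofReal_im] at h
    nlinarith [h]
  have hd := discrim_le_zero key
  rw [discrim] at hd
  nlinarith [hd]

lemma trace_re_eq' {d : ℕ} (Z : Matrix (Fin d) (Fin d) ℂ) :
    (Z.trace).re = ∑ i, (Z i i).re := by
  simp [Matrix.trace, Matrix.diag, Complex.re_sum]

lemma trace_re_nonneg' {d : ℕ} {Z : Matrix (Fin d) (Fin d) ℂ} (hZ : Z.PosSemidef) :
    0 ≤ (Z.trace).re := by
  rw [trace_re_eq']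
  exact Finset.sum_nonneg fun i _ => diag_re_nonneg' hZ i

lemma frob_nonneg' {d : ℕ} (Z : Matrix (Fin d) (Fin d) ℂ) : 0 ≤ frob Z :=
  Real.sqrt_nonneg _

lemma frob_le_trace_re' {d : ℕ} {Z : Matrix (Fin d) (Fin d) ℂ} (hZ : Z.PosSemidef) :
    frob Z ≤ (Z.trace).re := by
  have h2 : (∑ i, ∑ j, ‖Z i j‖ ^ 2) ≤ (∑ i, (Z i i).re) ^ 2 := by
    rw [sq, Finset.sum_mul]
    refine Finset.sum_le_sum fun i _ => ?_
    rw [Finset.mul_sum]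
    exact Finset.sum_le_sum fun j _ => entry_abs_sq_le' hZ i j
  calc frob Z ≤ Real.sqrt ((∑ i, (Z i i).re) ^ 2) := Real.sqrt_le_sqrt h2
    _ = ∑ i, (Z i i).re :=
        Real.sqrt_sq (Finset.sum_nonneg fun i _ => diag_re_nonneg' hZ i)
    _ = (Z.trace).re := (trace_re_eq' Z).symm

lemma re_trace_conjTranspose_mul_le' {d : ℕ} (W Z : Matrix (Fin d) (Fin d) ℂ) :
    ((Wᴴ * Z).trace).re ≤ frob W * frob Z := by
  have htr : ((Wᴴ * Z).trace).re
      = ∑ p : Fin d × Fin d, ((starRingEnd ℂ) (W p.2 p.1) * Z p.2 p.1).re := by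
    rw [Fintype.sum_prod_type]
    simp [Matrix.trace, Matrix.diag, Matrix.mul_apply, Complex.re_sum,
      Matrix.conjTranspose_apply, Complex.star_def]
  have hstep : ((Wᴴ * Z).trace).re
      ≤ ∑ p : Fin d × Fin d, ‖W p.2 p.1‖ * ‖Z p.2 p.1‖ := by
    rw [htr]
    refine Finset.sum_le_sum fun p _ => ?_
    calc ((starRingEnd ℂ) (W p.2 p.1) * Z p.2 p.1).re
        ≤ ‖(starRingEnd ℂ) (W p.2 p.1) * Z p.2 p.1‖ := Complex.re_le_norm _
      _ = ‖W p.2 p.1‖ * ‖Z p.2 p.1‖ := by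
          rw [norm_mul, Complex.norm_conj]
  have hcs := Finset.sum_mul_sq_le_sq_mul_sq Finset.univ
      (fun p : Fin d × Fin d => ‖W p.2 p.1‖)
      (fun p : Fin d × Fin d => ‖Z p.2 p.1‖)
  have hA : ∑ p : Fin d × Fin d, ‖W p.2 p.1‖ ^ 2
      = ∑ i, ∑ j, ‖W i j‖ ^ 2 := by
    rw [← Fintype.sum_prod_type']
    exact Fintype.sum_equiv (Equiv.prodComm _ _) _ _ (fun p => rfl)
  have hB : ∑ p : Fin d × Fin d, ‖Z p.2 p.1‖ ^ 2
      = ∑ i, ∑ j, ‖Z i j‖ ^ 2 := by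
    rw [← Fintype.sum_prod_type']
    exact Fintype.sum_equiv (Equiv.prodComm _ _) _ _ (fun p => rfl)
  have hsn : 0 ≤ ∑ p : Fin d × Fin d, ‖W p.2 p.1‖ * ‖Z p.2 p.1‖ :=
    Finset.sum_nonneg fun p _ => mul_nonneg (norm_nonneg _) (norm_nonneg _)
  calc ((Wᴴ * Z).trace).re
      ≤ ∑ p : Fin d × Fin d, ‖W p.2 p.1‖ * ‖Z p.2 p.1‖ := hstep
    _ = Real.sqrt ((∑ p : Fin d × Fin d,
          ‖W p.2 p.1‖ * ‖Z p.2 p.1‖) ^ 2) :=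
        (Real.sqrt_sq hsn).symm
    _ ≤ Real.sqrt ((∑ p : Fin d × Fin d, ‖W p.2 p.1‖ ^ 2)
          * ∑ p : Fin d × Fin d, ‖Z p.2 p.1‖ ^ 2) := Real.sqrt_le_sqrt hcs
    _ = Real.sqrt (∑ p : Fin d × Fin d, ‖W p.2 p.1‖ ^ 2)
          * Real.sqrt (∑ p : Fin d × Fin d, ‖Z p.2 p.1‖ ^ 2) :=
        Real.sqrt_mul (Finset.sum_nonneg fun p _ => sq_nonneg _) _
    _ = frob W * frob Z := by rw [hA, hB]; rfl

lemma frob_pos_of_ne' {d : ℕ} {W : Matrix (Fin d) (Fin d) ℂ} (h0 : W ≠ 0) :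
    0 < frob W := by
  obtain ⟨i, j, hij⟩ : ∃ i j, W i j ≠ 0 := by
    by_contra h
    push_neg at h
    exact h0 (Matrix.ext fun i j => h i j)
  apply Real.sqrt_pos.mpr
  have h1 : (0 : ℝ) < ‖W i j‖ ^ 2 := pow_pos (norm_pos_iff.mpr hij) 2
  have h2 : ‖W i j‖ ^ 2 ≤ ∑ j', ‖W i j'‖ ^ 2 :=
    Finset.single_le_sum (f := fun j' => ‖W i j'‖ ^ 2)
      (fun _ _ => sq_nonneg _) (Finset.mem_univ j)
  have h3 : (∑ j', ‖W i j'‖ ^ 2) ≤ ∑ i', ∑ j', ‖W i' j'‖ ^ 2 :=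
    Finset.single_le_sum (f := fun i' => ∑ j', ‖W i' j'‖ ^ 2)
      (fun _ _ => Finset.sum_nonneg fun _ _ => sq_nonneg _) (Finset.mem_univ i)
  linarith

lemma dcaY_term_le' {d : ℕ} {W Z : Matrix (Fin d) (Fin d) ℂ}
    (hZ : Z.PosSemidef) : (((dcaY W)ᴴ * Z).trace).re ≤ (Z.trace).re := by
  by_cases h0 : W = 0
  · rw [dcaY, if_pos h0]
    simpa using trace_re_nonneg' hZ
  · rw [dcaY, if_neg h0]
    have hfp : 0 < frob W := frob_pos_of_ne' h0
    have hsm : ((frob W : ℂ)⁻¹ • W)ᴴ * Z = (frob W : ℂ)⁻¹ • (Wᴴ * Z) := by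
      rw [Matrix.conjTranspose_smul, Matrix.smul_mul]
      congr 1
      simp [Complex.star_def, map_inv₀, Complex.conj_ofReal]
    rw [hsm, Matrix.trace_smul, smul_eq_mul, ← Complex.ofReal_inv, Complex.re_ofReal_mul]
    calc (frob W)⁻¹ * ((Wᴴ * Z).trace).re
        ≤ (frob W)⁻¹ * (frob W * frob Z) := by
          exact mul_le_mul_of_nonneg_left (re_trace_conjTranspose_mul_le' W Z)
            (inv_nonneg.mpr hfp.le)
      _ = frob Z := by field_simp
      _ ≤ (Z.trace).re := frob_le_trace_re' hZ

lemma frob_le_matL1' {d : ℕ} (Z : Matrix (Fin d) (Fin d) ℂ) : frob Z ≤ matL1 Z := by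
  have h : (∑ i, ∑ j, ‖Z i j‖ ^ 2) ≤ (∑ i, ∑ j, ‖Z i j‖) ^ 2 := by
    calc (∑ i, ∑ j, ‖Z i j‖ ^ 2)
        ≤ ∑ i, (∑ j, ‖Z i j‖) ^ 2 := by
          exact Finset.sum_le_sum fun i _ =>
            Finset.sum_sq_le_sq_sum_of_nonneg fun j _ => norm_nonneg _
      _ ≤ (∑ i, ∑ j, ‖Z i j‖) ^ 2 :=
          Finset.sum_sq_le_sq_sum_of_nonneg fun i _ =>
            Finset.sum_nonneg fun j _ => norm_nonneg _
  calc frob Z ≤ Real.sqrt ((∑ i, ∑ j, ‖Z i j‖) ^ 2) := Real.sqrt_le_sqrt h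
    _ = matL1 Z := Real.sqrt_sq (Finset.sum_nonneg fun i _ =>
        Finset.sum_nonneg fun j _ => norm_nonneg _)

end Aux

/-- Boundedness of the DCA sequence: ‖Xᵏ‖₁ ≤ ‖b‖₂²/(2μ) for k ≥ 1. -/
theorem dca_sequence_bounded {d m : ℕ} (a : Fin m → Fin d → ℂ) (b : Fin m → ℝ)
    (lam mu : ℝ) (hlam : 0 ≤ lam) (hmu : 0 < mu)
    (X : ℕ → Matrix (Fin d) (Fin d) ℂ) (hX : IsDCASeq a b lam mu X) :
    (∀ k : ℕ, 1 ≤ k → matL1 (X k) ≤ (l2 b) ^ 2 / (2 * mu)) ∧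
    ∃ R : ℝ, ∀ k : ℕ, frob (X k) ≤ R := by
  obtain ⟨h0, hpsd, hmin⟩ := hX
  have hbound : ∀ k, matL1 (X (k + 1)) ≤ (l2 b) ^ 2 / (2 * mu) := by
    intro k
    have h := hmin k 0 Matrix.PosSemidef.zero
    have hobj0 : dcaObj a b lam mu (dcaY (X k)) 0 = (1 / 2) * (l2 b) ^ 2 := by
      simp [dcaObj, calA, matL1, l2, Matrix.zero_mulVec, dotProduct_zero]
    set Z := X (k + 1) with hZdef
    have hZ := hpsd (k + 1)
    have hterm : lam * (((dcaY (X k))ᴴ * Z).trace).re ≤ lam * (Z.trace).re :=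
      mul_le_mul_of_nonneg_left (dcaY_term_le' hZ) hlam
    have hl2 : 0 ≤ (1 / 2) * (l2 (fun i => calA a Z i - b i)) ^ 2 := by positivity
    have hlow : mu * matL1 Z ≤ dcaObj a b lam mu (dcaY (X k)) Z := by
      rw [dcaObj]
      linarith
    have hup : mu * matL1 Z ≤ (1 / 2) * (l2 b) ^ 2 := by
      calc mu * matL1 Z ≤ dcaObj a b lam mu (dcaY (X k)) Z := hlow
        _ ≤ dcaObj a b lam mu (dcaY (X k)) 0 := h
        _ = (1 / 2) * (l2 b) ^ 2 := hobj0
    rw [le_div_iff₀ (by positivity : (0 : ℝ) < 2 * mu)]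
    nlinarith
  constructor
  · intro k hk
    obtain ⟨k', rfl⟩ : ∃ n, k = n + 1 := ⟨k - 1, by omega⟩
    exact hbound k'
  · refine ⟨(l2 b) ^ 2 / (2 * mu), fun k => ?_⟩
    cases k with
    | zero =>
        rw [h0]
        have hz : frob (0 : Matrix (Fin d) (Fin d) ℂ) = 0 := by simp [frob]
        rw [hz]
        positivity
    | succ k' =>
        exact (frob_le_matL1' _).trans (hbound k')
end
end

section
/- Let b ∈ ℝ^m, λ > 0 and μ > 0, and let (X^k)_{k≥0} be a DCA sequence for these data. Then ‖X^{k+1} − X^k‖_F → 0 as k → ∞. -/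
open Matrix BigOperators
open scoped ComplexOrder

noncomputable section

set_option maxHeartbeats 1000000

namespace DCAhelp

lemma sq_le_imp_le {x y : ℝ} (hx : 0 ≤ x) (hy : 0 ≤ y) (h : x ^ 2 ≤ y ^ 2) : x ≤ y := by
  nlinarith

variable {d : ℕ} (M N P Q : Matrix (Fin d) (Fin d) ℂ)

/-- real inner product -/
def rip (M N : Matrix (Fin d) (Fin d) ℂ) : ℝ := ((Nᴴ * M).trace).re

lemma rip_eq_sum : rip M N = ∑ i, ∑ j, ((starRingEnd ℂ) (N i j) * M i j).re := by
  unfold rip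
  rw [show (Nᴴ * M).trace = ∑ j, ∑ i, (starRingEnd ℂ) (N i j) * M i j by
    rw [Matrix.trace]; simp [Matrix.mul_apply, Matrix.diag, Matrix.conjTranspose_apply]]
  rw [Finset.sum_comm]
  simp [Complex.re_sum]

lemma conj_mul_re (z : ℂ) : ((starRingEnd ℂ) z * z).re = ‖z‖ ^ 2 := by
  rw [mul_comm, Complex.mul_conj, Complex.sq_norm]; simp

lemma conj_mul_re_comm (a b : ℂ) :
    ((starRingEnd ℂ) a * b).re = ((starRingEnd ℂ) b * a).re := by
  simp [Complex.mul_re]; ring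

lemma re_smul_helper (c : ℝ) (n m : ℂ) :
    ((starRingEnd ℂ) n * ((c : ℂ) * m)).re = c * ((starRingEnd ℂ) n * m).re := by
  simp [Complex.mul_re]; ring

lemma frob_nonneg : 0 ≤ frob M := Real.sqrt_nonneg _

lemma frob_sq : frob M ^ 2 = ∑ i, ∑ j, ‖M i j‖ ^ 2 := by
  rw [frob, Real.sq_sqrt]; positivity

lemma rip_self : rip M M = frob M ^ 2 := by
  rw [rip_eq_sum, frob_sq]
  exact Finset.sum_congr rfl fun i _ => Finset.sum_congr rfl fun j _ => conj_mul_re _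

lemma rip_comm : rip M N = rip N M := by
  simp only [rip_eq_sum, conj_mul_re_comm]

lemma rip_add_left : rip (M + P) N = rip M N + rip P N := by
  simp [rip_eq_sum, mul_add, Finset.sum_add_distrib]

lemma rip_add_right : rip M (N + P) = rip M N + rip M P := by
  rw [rip_comm, rip_add_left, rip_comm N M, rip_comm P M]

lemma rip_smul_left (c : ℝ) : rip ((c : ℂ) • M) N = c * rip M N := by
  simp only [rip_eq_sum, Matrix.smul_apply, smul_eq_mul, re_smul_helper, ← Finset.mul_sum]

lemma rip_smul_right (c : ℝ) : rip M ((c : ℂ) • N) = c * rip M N := by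
  rw [rip_comm, rip_smul_left, rip_comm N M]

lemma rip_zero_left : rip 0 N = 0 := by
  have h := rip_smul_left N N (0 : ℝ)
  simpa using h

lemma rip_zero_right : rip M 0 = 0 := by rw [rip_comm, rip_zero_left]

lemma rip_neg_left : rip (-M) N = - rip M N := by
  have h : ((-1 : ℝ) : ℂ) • M = -M := by norm_num
  rw [← h, rip_smul_left]; ring

lemma rip_sub_left : rip (M - P) N = rip M N - rip P N := by
  rw [sub_eq_add_neg, rip_add_left, rip_neg_left]; ring

lemma rip_sub_right : rip M (N - P) = rip M N - rip M P := by
  rw [rip_comm, rip_sub_left, rip_comm N M, rip_comm P M]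

/-- Cauchy–Schwarz -/
lemma abs_rip_le : |rip M N| ≤ frob M * frob N := by
  rw [rip_eq_sum]
  have h1 : |∑ i, ∑ j, ((starRingEnd ℂ) (N i j) * M i j).re| ≤
      ∑ i, ∑ j, ‖M i j‖ * ‖N i j‖ := by
    refine (Finset.abs_sum_le_sum_abs _ _).trans ?_
    refine Finset.sum_le_sum fun i _ => ?_
    refine (Finset.abs_sum_le_sum_abs _ _).trans ?_
    refine Finset.sum_le_sum fun j _ => ?_
    refine (Complex.abs_re_le_norm _).trans ?_
    rw [norm_mul, Complex.norm_conj, mul_comm]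
  refine h1.trans ?_
  have h2 := Real.sum_mul_le_sqrt_mul_sqrt (Finset.univ : Finset (Fin d × Fin d))
    (fun p => ‖M p.1 p.2‖) (fun p => ‖N p.1 p.2‖)
  rw [Fintype.sum_prod_type] at h2
  have e1 : frob M = Real.sqrt (∑ p : Fin d × Fin d, ‖M p.1 p.2‖ ^ 2) := by
    rw [frob, Fintype.sum_prod_type]
  have e2 : frob N = Real.sqrt (∑ p : Fin d × Fin d, ‖N p.1 p.2‖ ^ 2) := by
    rw [frob, Fintype.sum_prod_type]
  rw [e1, e2]
  exact h2

lemma rip_le : rip M N ≤ frob M * frob N := (le_abs_self _).trans (abs_rip_le M N)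

lemma frob_sub_sq : frob (M - N) ^ 2 = frob M ^ 2 + frob N ^ 2 - 2 * rip M N := by
  rw [← rip_self, rip_sub_left, rip_sub_right, rip_sub_right, rip_self, rip_self, rip_comm N M]
  ring

lemma frob_add_le : frob (M + N) ≤ frob M + frob N := by
  refine sq_le_imp_le (frob_nonneg _) (add_nonneg (frob_nonneg M) (frob_nonneg N)) ?_
  rw [← rip_self, rip_add_left, rip_add_right, rip_add_right, rip_self, rip_self, rip_comm N M]
  nlinarith [rip_le M N]

lemma frob_smul (c : ℝ) : frob ((c : ℂ) • M) = |c| * frob M := by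
  have h : frob ((c:ℂ) • M) ^ 2 = (|c| * frob M) ^ 2 := by
    rw [← rip_self, rip_smul_left, rip_smul_right, rip_self, mul_pow, sq_abs]; ring
  rw [← Real.sqrt_sq (frob_nonneg ((c:ℂ) • M)), h,
    Real.sqrt_sq (mul_nonneg (abs_nonneg c) (frob_nonneg M))]

lemma frob_neg : frob (-M) = frob M := by
  have h : ((-1 : ℝ) : ℂ) • M = -M := by norm_num
  rw [← h, frob_smul]; simp

lemma abs_frob_sub_frob : |frob M - frob N| ≤ frob (M - N) := by
  have e1 : frob M ≤ frob (M - N) + frob N := by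
    have h := frob_add_le (M - N) N; rw [sub_add_cancel] at h; exact h
  have e2 : frob N ≤ frob (M - N) + frob M := by
    have h := frob_add_le (N - M) M; rw [sub_add_cancel] at h
    rw [← neg_sub M N, frob_neg] at h; exact h
  rw [abs_le]; constructor <;> linarith

lemma frob_eq_zero_iff : frob M = 0 ↔ M = 0 := by
  constructor
  · intro h
    have h2 : (∑ i, ∑ j, ‖M i j‖ ^ 2) = 0 := by
      have := frob_sq M; rw [h] at this; simpa using this.symm
    ext i j
    have h3 : ∀ i : Fin d, (0:ℝ) ≤ ∑ j, ‖M i j‖ ^ 2 :=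
      fun i => Finset.sum_nonneg fun j _ => sq_nonneg _
    rw [Finset.sum_eq_zero_iff_of_nonneg (fun i _ => h3 i)] at h2
    have h4 := h2 i (Finset.mem_univ i)
    rw [Finset.sum_eq_zero_iff_of_nonneg (fun j _ => sq_nonneg _)] at h4
    have h5 := h4 j (Finset.mem_univ j)
    have h6 : ‖M i j‖ = 0 := by
      nlinarith [norm_nonneg (M i j)]
    simpa using h6
  · intro h; rw [h, frob]; simp

end DCAhelp

namespace DCAhelp
variable {d m : ℕ} (M N P Q : Matrix (Fin d) (Fin d) ℂ)

lemma matL1_nonneg : 0 ≤ matL1 M :=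
  Finset.sum_nonneg fun i _ => Finset.sum_nonneg fun j _ => norm_nonneg _

lemma frob_le_matL1 : frob M ≤ matL1 M := by
  refine sq_le_imp_le (frob_nonneg M) (matL1_nonneg M) ?_
  rw [frob_sq, matL1]
  have h1 : ∀ p : Fin d × Fin d, (0:ℝ) ≤ ‖M p.1 p.2‖ := fun p => norm_nonneg _
  have h := Finset.sum_sq_le_sq_sum_of_nonneg (s := (Finset.univ : Finset (Fin d × Fin d)))
    (f := fun p => ‖M p.1 p.2‖) (fun p _ => h1 p)
  rw [Fintype.sum_prod_type, Fintype.sum_prod_type] at h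
  exact h

lemma matL1_le_frob : matL1 M ≤ d * frob M := by
  rw [matL1]
  have h2 := Real.sum_mul_le_sqrt_mul_sqrt (Finset.univ : Finset (Fin d × Fin d))
    (fun p => ‖M p.1 p.2‖) (fun _ => (1:ℝ))
  simp only [mul_one, one_pow] at h2
  rw [Fintype.sum_prod_type] at h2
  refine h2.trans ?_
  have e1 : Real.sqrt (∑ p : Fin d × Fin d, ‖M p.1 p.2‖ ^ 2) = frob M := by
    rw [frob, Fintype.sum_prod_type]
  have e2 : Real.sqrt (∑ _p : Fin d × Fin d, (1:ℝ)) = d := by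
    rw [Finset.sum_const]
    simp only [Finset.card_univ, Fintype.card_prod, Fintype.card_fin, nsmul_eq_mul, mul_one]
    push_cast
    exact Real.sqrt_mul_self (Nat.cast_nonneg d)
  rw [e1, e2, mul_comm]

lemma matL1_add_le : matL1 (M + N) ≤ matL1 M + matL1 N := by
  rw [matL1, matL1, matL1, ← Finset.sum_add_distrib]
  refine Finset.sum_le_sum fun i _ => ?_
  rw [← Finset.sum_add_distrib]
  refine Finset.sum_le_sum fun j _ => ?_
  simpa using norm_add_le (M i j) (N i j)

lemma matL1_smul (c : ℝ) : matL1 ((c : ℂ) • M) = |c| * matL1 M := by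
  rw [matL1, matL1, Finset.mul_sum]
  refine Finset.sum_congr rfl fun i _ => ?_
  rw [Finset.mul_sum]
  refine Finset.sum_congr rfl fun j _ => ?_
  simp [norm_mul, Complex.norm_real]

lemma matL1_zero : matL1 (0 : Matrix (Fin d) (Fin d) ℂ) = 0 := by simp [matL1]

lemma abs_matL1_sub_matL1 : |matL1 M - matL1 N| ≤ matL1 (M - N) := by
  have e1 : matL1 M ≤ matL1 (M - N) + matL1 N := by
    have h := matL1_add_le (M - N) N; rw [sub_add_cancel] at h; exact h
  have e2 : matL1 N ≤ matL1 (M - N) + matL1 M := by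
    have h := matL1_add_le (N - M) M; rw [sub_add_cancel] at h
    have e3 : matL1 (N - M) = matL1 (M - N) := by
      rw [matL1, matL1]
      refine Finset.sum_congr rfl fun i _ => Finset.sum_congr rfl fun j _ => ?_
      have h4 : (N - M) i j = -((M - N) i j) := by
        rw [Matrix.sub_apply, Matrix.sub_apply]; ring
      rw [h4, norm_neg]
    rw [e3] at h; exact h
  rw [abs_le]; constructor <;> linarith

/-- real part of trace -/
lemma retr_eq_sum : (M.trace).re = ∑ i, (M i i).re := by
  rw [Matrix.trace]; simp [Matrix.diag, Complex.re_sum]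

lemma retr_add : ((M + N).trace).re = (M.trace).re + (N.trace).re := by
  simp [retr_eq_sum, Finset.sum_add_distrib]

lemma retr_smul (c : ℝ) : (((c : ℂ) • M).trace).re = c * (M.trace).re := by
  simp [retr_eq_sum, Finset.mul_sum]

lemma abs_retr_le : |(M.trace).re| ≤ Real.sqrt d * frob M := by
  rw [retr_eq_sum]
  have h1 : |∑ i, (M i i).re| ≤ ∑ i, ‖M i i‖ * 1 := by
    refine (Finset.abs_sum_le_sum_abs _ _).trans ?_
    refine Finset.sum_le_sum fun i _ => ?_
    rw [mul_one]; exact Complex.abs_re_le_norm _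
  refine h1.trans ?_
  have h2 := Real.sum_mul_le_sqrt_mul_sqrt (Finset.univ : Finset (Fin d))
    (fun i => ‖M i i‖) (fun _ => (1:ℝ))
  refine h2.trans ?_
  simp only [one_pow]
  have e2 : Real.sqrt (∑ _i : Fin d, (1:ℝ)) = Real.sqrt d := by
    rw [Finset.sum_const]; simp [Finset.card_univ]
  have hfr : Real.sqrt (∑ i, ‖M i i‖ ^ 2) ≤ frob M := by
    rw [frob]
    refine Real.sqrt_le_sqrt ?_
    refine Finset.sum_le_sum fun i _ => ?_
    exact Finset.single_le_sum (f := fun j => ‖M i j‖ ^ 2) (fun j _ => sq_nonneg _)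
      (Finset.mem_univ i)
  rw [e2, mul_comm]
  exact mul_le_mul_of_nonneg_left hfr (Real.sqrt_nonneg _)

lemma retr_sub : ((M - N).trace).re = (M.trace).re - (N.trace).re := by
  simp [retr_eq_sum, Finset.sum_sub_distrib]

end DCAhelp

namespace DCAhelp
variable {d m : ℕ}

/-- real dot product -/
def dp {m : ℕ} (v w : Fin m → ℝ) : ℝ := ∑ i, v i * w i

lemma dp_self_eq (v : Fin m → ℝ) : dp v v = ∑ i, v i ^ 2 :=
  Finset.sum_congr rfl fun i _ => (sq (v i)).symm

lemma dp_self_nonneg (v : Fin m → ℝ) : 0 ≤ dp v v := by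
  rw [dp_self_eq]; exact Finset.sum_nonneg fun i _ => sq_nonneg _

lemma l2_eq_sqrt_dp (v : Fin m → ℝ) : l2 v = Real.sqrt (dp v v) := by
  rw [l2, dp_self_eq]

lemma l2_nonneg (v : Fin m → ℝ) : 0 ≤ l2 v := Real.sqrt_nonneg _

lemma l2_sq (v : Fin m → ℝ) : l2 v ^ 2 = dp v v := by
  rw [l2_eq_sqrt_dp, Real.sq_sqrt (dp_self_nonneg v)]

lemma dp_comm (v w : Fin m → ℝ) : dp v w = dp w v :=
  Finset.sum_congr rfl fun i _ => mul_comm _ _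

lemma abs_dp_le (v w : Fin m → ℝ) : |dp v w| ≤ l2 v * l2 w := by
  rw [dp, l2, l2]
  have h1 : |∑ i, v i * w i| ≤ ∑ i, |v i| * |w i| := by
    refine (Finset.abs_sum_le_sum_abs _ _).trans ?_
    refine Finset.sum_le_sum fun i _ => ?_
    rw [abs_mul]
  refine h1.trans ?_
  have h2 := Real.sum_mul_le_sqrt_mul_sqrt (Finset.univ : Finset (Fin m))
    (fun i => |v i|) (fun i => |w i|)
  simpa [sq_abs] using h2

lemma dp_le (v w : Fin m → ℝ) : dp v w ≤ l2 v * l2 w := (le_abs_self _).trans (abs_dp_le v w)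

/-- midpoint identity for the quadratic part -/
lemma dp_mid (x y b : Fin m → ℝ) :
    dp (fun i => (x i + y i) / 2 - b i) (fun i => (x i + y i) / 2 - b i)
      = dp (fun i => x i - b i) (fun i => x i - b i) / 2
        + dp (fun i => y i - b i) (fun i => y i - b i) / 2
        - dp (fun i => y i - x i) (fun i => y i - x i) / 4 := by
  simp only [dp]
  rw [Finset.sum_div, Finset.sum_div, Finset.sum_div, ← Finset.sum_add_distrib,
    ← Finset.sum_sub_distrib]
  exact Finset.sum_congr rfl fun i _ => by ring

/-- ray identity for the quadratic part -/
lemma dp_ray (t : ℝ) (v b : Fin m → ℝ) :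
    dp (fun i => t * v i - b i) (fun i => t * v i - b i)
      = t ^ 2 * dp v v - 2 * t * dp v b + dp b b := by
  unfold dp
  rw [Finset.mul_sum, Finset.mul_sum, ← Finset.sum_sub_distrib, ← Finset.sum_add_distrib]
  exact Finset.sum_congr rfl fun i _ => by ring

/-- difference of squares -/
lemma dp_self_sub (x y : Fin m → ℝ) :
    dp y y - dp x x = dp (fun i => y i - x i) (fun i => y i + x i) := by
  unfold dp
  rw [← Finset.sum_sub_distrib]
  exact Finset.sum_congr rfl fun i _ => by ring

lemma dp_shift (u b : Fin m → ℝ) :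
    dp (fun i => u i - b i) (fun i => u i - b i) = dp u u - 2 * dp u b + dp b b := by
  unfold dp
  rw [Finset.mul_sum, ← Finset.sum_sub_distrib, ← Finset.sum_add_distrib]
  exact Finset.sum_congr rfl fun i _ => by ring

/-! calA lemmas -/

variable (a : Fin m → Fin d → ℂ)

lemma calA_zero : ∀ i, calA a (0 : Matrix (Fin d) (Fin d) ℂ) i = 0 := by
  intro i; simp [calA]

lemma calA_add (M N : Matrix (Fin d) (Fin d) ℂ) :
    ∀ i, calA a (M + N) i = calA a M i + calA a N i := by
  intro i; simp [calA, Matrix.add_mulVec, dotProduct_add]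

lemma calA_smul (c : ℝ) (M : Matrix (Fin d) (Fin d) ℂ) :
    ∀ i, calA a ((c : ℂ) • M) i = c * calA a M i := by
  intro i
  simp [calA, Matrix.smul_mulVec, dotProduct_smul, smul_eq_mul, Complex.mul_re]

lemma calA_bound (M : Matrix (Fin d) (Fin d) ℂ) :
    ∀ i, |calA a M i| ≤ (∑ j, ‖a i j‖ ^ 2) * frob M := by
  intro i
  refine (Complex.abs_re_le_norm _).trans ?_
  have h1 : ‖star (a i) ⬝ᵥ M.mulVec (a i)‖ ≤
      ∑ p, ∑ q, ‖a i p‖ * ‖M p q‖ * ‖a i q‖ := by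
    rw [dotProduct]
    refine (norm_sum_le _ _).trans ?_
    refine Finset.sum_le_sum fun p _ => ?_
    rw [Matrix.mulVec, dotProduct, Finset.mul_sum]
    refine (norm_sum_le _ _).trans ?_
    refine Finset.sum_le_sum fun q _ => ?_
    rw [norm_mul, norm_mul]
    simp [Pi.star_apply, Complex.norm_conj]
    ring_nf
    exact le_of_eq (by ring)
  refine h1.trans ?_
  have h2 := Real.sum_mul_le_sqrt_mul_sqrt (Finset.univ : Finset (Fin d × Fin d))
    (fun p => ‖M p.1 p.2‖) (fun p => ‖a i p.1‖ * ‖a i p.2‖)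
  have e0 : ∑ p : Fin d × Fin d, ‖M p.1 p.2‖ *
      (‖a i p.1‖ * ‖a i p.2‖) =
      ∑ p, ∑ q, ‖a i p‖ * ‖M p q‖ * ‖a i q‖ := by
    rw [Fintype.sum_prod_type]
    exact Finset.sum_congr rfl fun p _ => Finset.sum_congr rfl fun q _ => by ring
  rw [e0] at h2
  refine h2.trans ?_
  have e1 : Real.sqrt (∑ p : Fin d × Fin d, ‖M p.1 p.2‖ ^ 2) = frob M := by
    rw [frob, Fintype.sum_prod_type]
  have e2 : Real.sqrt (∑ p : Fin d × Fin d,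
      (‖a i p.1‖ * ‖a i p.2‖) ^ 2) = ∑ j, ‖a i j‖ ^ 2 := by
    have e3 : ∑ p : Fin d × Fin d, (‖a i p.1‖ * ‖a i p.2‖) ^ 2
        = (∑ j, ‖a i j‖ ^ 2) * (∑ j, ‖a i j‖ ^ 2) := by
      rw [Finset.sum_mul_sum, Fintype.sum_prod_type]
      exact Finset.sum_congr rfl fun p _ => Finset.sum_congr rfl fun q _ => by ring
    rw [e3, Real.sqrt_mul_self (Finset.sum_nonneg fun j _ => sq_nonneg _)]
  rw [e1, e2, mul_comm]

lemma l2_calA_le (M : Matrix (Fin d) (Fin d) ℂ) :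
    l2 (calA a M) ≤ Real.sqrt (∑ i, (∑ j, ‖a i j‖ ^ 2) ^ 2) * frob M := by
  refine sq_le_imp_le (l2_nonneg _) (mul_nonneg (Real.sqrt_nonneg _) (frob_nonneg _)) ?_
  rw [l2_sq, dp_self_eq, mul_pow, Real.sq_sqrt (Finset.sum_nonneg fun i _ => sq_nonneg _),
    Finset.sum_mul]
  refine Finset.sum_le_sum fun i _ => ?_
  rw [← mul_pow]
  have h := calA_bound a M i
  have h2 : calA a M i ^ 2 = |calA a M i| ^ 2 := (sq_abs _).symm
  rw [h2]
  exact pow_le_pow_left₀ (abs_nonneg _) h 2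

/-! PSD lemmas -/

lemma psd_smul {c : ℝ} (hc : 0 ≤ c) {M : Matrix (Fin d) (Fin d) ℂ} (hM : M.PosSemidef) :
    ((c : ℂ) • M).PosSemidef := by
  refine .of_dotProduct_mulVec_nonneg ?_ ?_
  · have h1 : ((c : ℂ) • M)ᴴ = (starRingEnd ℂ) (c : ℂ) • Mᴴ := by
      rw [Matrix.conjTranspose_smul]; rfl
    rw [Matrix.IsHermitian, h1, Complex.conj_ofReal, hM.1]
  · intro x
    have h2 : star x ⬝ᵥ ((c : ℂ) • M).mulVec x = (c : ℂ) * (star x ⬝ᵥ M.mulVec x) := by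
      rw [Matrix.smul_mulVec, dotProduct_smul, smul_eq_mul]
    rw [h2]
    exact mul_nonneg (by exact_mod_cast Complex.zero_le_real.mpr hc) (hM.dotProduct_mulVec_nonneg x)

lemma diag_re_nonneg {M : Matrix (Fin d) (Fin d) ℂ} (hM : M.PosSemidef) (i : Fin d) :
    0 ≤ (M i i).re := by
  have h := hM.re_dotProduct_nonneg (Pi.single i 1)
  have e : star (Pi.single i 1 : Fin d → ℂ) ⬝ᵥ M.mulVec (Pi.single i 1) = M i i := by
    simp [dotProduct, Matrix.mulVec, Pi.single_apply, apply_ite, Finset.mul_sum,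
      Finset.sum_ite_eq', mul_comm]
  rw [e] at h
  exact h

lemma retr_nonneg_psd {M : Matrix (Fin d) (Fin d) ℂ} (hM : M.PosSemidef) :
    0 ≤ (M.trace).re := by
  rw [retr_eq_sum]
  exact Finset.sum_nonneg fun i _ => diag_re_nonneg hM i

lemma frob_conjTranspose (M : Matrix (Fin d) (Fin d) ℂ) : frob Mᴴ = frob M := by
  rw [frob, frob, Finset.sum_comm]
  exact congrArg Real.sqrt (Finset.sum_congr rfl fun j _ => Finset.sum_congr rfl fun i _ => by
    rw [Matrix.conjTranspose_apply,
      show star (M j i) = (starRingEnd ℂ) (M j i) from rfl, Complex.norm_conj])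

lemma frob_mul_le (P Q : Matrix (Fin d) (Fin d) ℂ) : frob (P * Q) ≤ frob P * frob Q := by
  refine sq_le_imp_le (frob_nonneg _) (mul_nonneg (frob_nonneg _) (frob_nonneg _)) ?_
  rw [frob_sq, mul_pow, frob_sq, frob_sq]
  have key : ∀ i j : Fin d, ‖(P * Q) i j‖ ^ 2 ≤
      (∑ k, ‖P i k‖ ^ 2) * (∑ k, ‖Q k j‖ ^ 2) := by
    intro i j
    have h1 : ‖(P * Q) i j‖ ≤ ∑ k, ‖P i k‖ * ‖Q k j‖ := by
      rw [Matrix.mul_apply]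
      refine (norm_sum_le _ _).trans ?_
      exact Finset.sum_le_sum fun k _ => le_of_eq (norm_mul _ _)
    have h2 := Real.sum_mul_le_sqrt_mul_sqrt (Finset.univ : Finset (Fin d))
      (fun k => ‖P i k‖) (fun k => ‖Q k j‖)
    have h3 := h1.trans h2
    have h4 : 0 ≤ ‖(P * Q) i j‖ := norm_nonneg _
    have h5 := Real.sq_sqrt (Finset.sum_nonneg
      (fun k (_ : k ∈ Finset.univ) => sq_nonneg (‖P i k‖)))
    have h6 := Real.sq_sqrt (Finset.sum_nonneg
      (fun k (_ : k ∈ Finset.univ) => sq_nonneg (‖Q k j‖)))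
    nlinarith [Real.sqrt_nonneg (∑ k, ‖P i k‖ ^ 2),
      Real.sqrt_nonneg (∑ k, ‖Q k j‖ ^ 2)]
  calc ∑ i, ∑ j, ‖(P * Q) i j‖ ^ 2
      ≤ ∑ i, ∑ j, (∑ k, ‖P i k‖ ^ 2) * (∑ k, ‖Q k j‖ ^ 2) :=
        Finset.sum_le_sum fun i _ => Finset.sum_le_sum fun j _ => key i j
    _ = (∑ i, ∑ k, ‖P i k‖ ^ 2) * (∑ j, ∑ k, ‖Q k j‖ ^ 2) := by
        rw [Finset.sum_mul_sum]
    _ = (∑ i, ∑ j, ‖P i j‖ ^ 2) * (∑ i, ∑ j, ‖Q i j‖ ^ 2) := by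
        rw [Finset.sum_comm (f := fun k j => ‖Q k j‖ ^ 2)]

lemma retr_ge_frob {M : Matrix (Fin d) (Fin d) ℂ} (hM : M.PosSemidef) :
    frob M ≤ (M.trace).re := by
  obtain ⟨B, hB⟩ : ∃ B : Matrix (Fin d) (Fin d) ℂ, M = Bᴴ * B := by
    open scoped MatrixOrder in
    obtain ⟨B, hB⟩ := CStarAlgebra.nonneg_iff_eq_star_mul_self.mp hM.nonneg
    exact ⟨B, hB⟩
  have h1 : (M.trace).re = frob B ^ 2 := by
    rw [hB, ← rip_self]; rfl
  have h2 : frob M ≤ frob B ^ 2 := by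
    rw [hB, sq]
    exact (frob_mul_le Bᴴ B).trans_eq (by rw [frob_conjTranspose])
  rw [h1]; exact h2

lemma rip_nonneg_psd {M N : Matrix (Fin d) (Fin d) ℂ} (hM : M.PosSemidef)
    (hN : N.PosSemidef) : 0 ≤ rip M N := by
  obtain ⟨B, hB⟩ : ∃ B : Matrix (Fin d) (Fin d) ℂ, M = Bᴴ * B := by
    open scoped MatrixOrder in
    obtain ⟨B, hB⟩ := CStarAlgebra.nonneg_iff_eq_star_mul_self.mp hM.nonneg
    exact ⟨B, hB⟩
  have h1 : rip M N = ((B * N * Bᴴ).trace).re := by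
    rw [rip, hN.1, hB, show N * (Bᴴ * B) = (N * Bᴴ) * B by rw [Matrix.mul_assoc],
      Matrix.trace_mul_comm, Matrix.mul_assoc]
  rw [h1]
  exact retr_nonneg_psd (hN.mul_mul_conjTranspose_same B)

end DCAhelp

namespace DCAhelp
variable {d m : ℕ}

lemma frob_zero : frob (0 : Matrix (Fin d) (Fin d) ℂ) = 0 := by simp [frob]

lemma dp_sub_left (x y w : Fin m → ℝ) :
    dp (fun i => x i - y i) w = dp x w - dp y w := by
  simp only [dp]
  rw [← Finset.sum_sub_distrib]
  exact Finset.sum_congr rfl fun i _ => by ring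

lemma dp_add_self (v w : Fin m → ℝ) :
    dp (fun i => v i + w i) (fun i => v i + w i) = dp v v + 2 * dp v w + dp w w := by
  simp only [dp]
  rw [Finset.mul_sum, ← Finset.sum_add_distrib, ← Finset.sum_add_distrib]
  exact Finset.sum_congr rfl fun i _ => by ring

lemma l2_add_le (v w : Fin m → ℝ) : l2 (fun i => v i + w i) ≤ l2 v + l2 w := by
  refine sq_le_imp_le (l2_nonneg _) (add_nonneg (l2_nonneg _) (l2_nonneg _)) ?_
  rw [l2_sq, dp_add_self]
  nlinarith [dp_le v w, l2_sq v, l2_sq w, l2_nonneg v, l2_nonneg w]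

/-! the concave-part functional -/

def Gf (lam mu : ℝ) (Z : Matrix (Fin d) (Fin d) ℂ) : ℝ :=
  lam * ((Z.trace).re - frob Z) + mu * matL1 Z

lemma Gf_zero (lam mu : ℝ) : Gf lam mu (0 : Matrix (Fin d) (Fin d) ℂ) = 0 := by
  simp [Gf, frob_zero, matL1_zero, Matrix.trace_zero]

lemma Gf_ge_matL1 {lam mu : ℝ} (hlam : 0 ≤ lam) {Z : Matrix (Fin d) (Fin d) ℂ}
    (hZ : Z.PosSemidef) : mu * matL1 Z ≤ Gf lam mu Z := by
  have h := retr_ge_frob hZ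
  have h2 : 0 ≤ lam * (((Z.trace).re) - frob Z) := mul_nonneg hlam (by linarith)
  rw [Gf]; linarith

lemma Gf_nonneg {lam mu : ℝ} (hlam : 0 ≤ lam) (hmu : 0 ≤ mu) {Z : Matrix (Fin d) (Fin d) ℂ}
    (hZ : Z.PosSemidef) : 0 ≤ Gf lam mu Z :=
  le_trans (mul_nonneg hmu (matL1_nonneg Z)) (Gf_ge_matL1 hlam hZ)

lemma Gf_smul (lam mu : ℝ) {c : ℝ} (hc : 0 ≤ c) (Z : Matrix (Fin d) (Fin d) ℂ) :
    Gf lam mu ((c : ℂ) • Z) = c * Gf lam mu Z := by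
  rw [Gf, Gf, retr_smul, frob_smul, matL1_smul, abs_of_nonneg hc]; ring

lemma Gf_lip {lam mu : ℝ} (hlam : 0 ≤ lam) (hmu : 0 ≤ mu)
    (P Q : Matrix (Fin d) (Fin d) ℂ) :
    |Gf lam mu P - Gf lam mu Q| ≤ (lam * (Real.sqrt d + 1) + mu * d) * frob (P - Q) := by
  have b1 : |((P - Q).trace).re| ≤ Real.sqrt d * frob (P - Q) := abs_retr_le _
  have b2 : |frob P - frob Q| ≤ frob (P - Q) := abs_frob_sub_frob _ _
  have b3 : |matL1 P - matL1 Q| ≤ (d : ℝ) * frob (P - Q) :=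
    (abs_matL1_sub_matL1 _ _).trans (matL1_le_frob _)
  have e : Gf lam mu P - Gf lam mu Q =
      lam * (((P - Q).trace).re - (frob P - frob Q)) + mu * (matL1 P - matL1 Q) := by
    rw [Gf, Gf, retr_sub]; ring
  rw [e]
  refine (abs_add_le _ _).trans ?_
  rw [abs_mul, abs_mul, abs_of_nonneg hlam, abs_of_nonneg hmu]
  have b4 : |((P - Q).trace).re - (frob P - frob Q)| ≤
      |((P - Q).trace).re| + |frob P - frob Q| := abs_sub _ _
  have b5 : |((P - Q).trace).re - (frob P - frob Q)| ≤
      Real.sqrt d * frob (P - Q) + frob (P - Q) := b4.trans (add_le_add b1 b2)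
  have hf := frob_nonneg (P - Q)
  nlinarith [mul_le_mul_of_nonneg_left b5 hlam, mul_le_mul_of_nonneg_left b3 hmu]

/-! dcaY facts -/

lemma dcaY_eq (X : Matrix (Fin d) (Fin d) ℂ) (h : X ≠ 0) :
    dcaY X = (((frob X)⁻¹ : ℝ) : ℂ) • X := by
  rw [dcaY, if_neg h, Complex.ofReal_inv]

lemma frob_pos {X : Matrix (Fin d) (Fin d) ℂ} (h : X ≠ 0) : 0 < frob X :=
  lt_of_le_of_ne (frob_nonneg X) fun e => h ((frob_eq_zero_iff X).mp e.symm)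

lemma dcaY_psd {X : Matrix (Fin d) (Fin d) ℂ} (hX : X.PosSemidef) : (dcaY X).PosSemidef := by
  by_cases h : X = 0
  · rw [dcaY, if_pos h]; exact Matrix.PosSemidef.zero
  · rw [dcaY_eq X h]; exact psd_smul (inv_nonneg.mpr (frob_nonneg X)) hX

lemma frob_dcaY_one {X : Matrix (Fin d) (Fin d) ℂ} (h : X ≠ 0) : frob (dcaY X) = 1 := by
  rw [dcaY_eq X h, frob_smul, abs_of_nonneg (inv_nonneg.mpr (frob_nonneg X)),
    inv_mul_cancel₀ (ne_of_gt (frob_pos h))]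

lemma frob_dcaY_le_one (X : Matrix (Fin d) (Fin d) ℂ) : frob (dcaY X) ≤ 1 := by
  by_cases h : X = 0
  · rw [dcaY, if_pos h, frob_zero]; norm_num
  · rw [frob_dcaY_one h]

lemma rip_dcaY_self (X : Matrix (Fin d) (Fin d) ℂ) : rip X (dcaY X) = frob X := by
  by_cases h : X = 0
  · subst h; rw [dcaY, if_pos rfl, rip_zero_right, frob_zero]
  · rw [dcaY_eq X h, rip_smul_right, rip_self, pow_two,
      inv_mul_cancel_left₀ (ne_of_gt (frob_pos h))]

lemma smul_dcaY (X : Matrix (Fin d) (Fin d) ℂ) : ((frob X : ℝ) : ℂ) • dcaY X = X := by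
  by_cases h : X = 0
  · subst h; simp [dcaY]
  · rw [dcaY_eq X h, smul_smul, ← Complex.ofReal_mul,
      mul_inv_cancel₀ (ne_of_gt (frob_pos h))]
    simp

lemma rip_dcaY_le (M X : Matrix (Fin d) (Fin d) ℂ) : rip M (dcaY X) ≤ frob M := by
  refine (rip_le M (dcaY X)).trans ?_
  calc frob M * frob (dcaY X) ≤ frob M * 1 :=
        mul_le_mul_of_nonneg_left (frob_dcaY_le_one X) (frob_nonneg M)
    _ = frob M := mul_one _

/-! objective rewriting -/

lemma dcaObj_eq (a : Fin m → Fin d → ℂ) (b : Fin m → ℝ) (lam mu : ℝ)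
    (Y Z : Matrix (Fin d) (Fin d) ℂ) :
    dcaObj a b lam mu Y Z
      = (1/2) * dp (fun i => calA a Z i - b i) (fun i => calA a Z i - b i)
        + lam * (Z.trace).re - lam * rip Z Y + mu * matL1 Z := by
  rw [dcaObj, l2_sq]; rfl

/-- Key decrease inequality via the midpoint. -/
lemma decrease (a : Fin m → Fin d → ℂ) (b : Fin m → ℝ) {lam mu : ℝ}
    (hmu : 0 < mu) (X : ℕ → Matrix (Fin d) (Fin d) ℂ)
    (hX : IsDCASeq a b lam mu X) (k : ℕ) :
    dcaObj a b lam mu (dcaY (X k)) (X (k + 1))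
      + (1/4) * dp (fun i => calA a (X (k+1)) i - calA a (X k) i)
          (fun i => calA a (X (k+1)) i - calA a (X k) i)
      ≤ dcaObj a b lam mu (dcaY (X k)) (X k) := by
  obtain ⟨h0, hPSD, hmin⟩ := hX
  have hmidpsd : ((((1:ℝ)/2 : ℝ) : ℂ) • (X k + X (k+1))).PosSemidef :=
    psd_smul (by norm_num) ((hPSD k).add (hPSD (k+1)))
  have h1 := hmin k _ hmidpsd
  simp only [dcaObj_eq] at h1 ⊢
  have hres : (fun i => calA a ((((1:ℝ)/2 : ℝ) : ℂ) • (X k + X (k+1))) i - b i)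
      = (fun i => (calA a (X k) i + calA a (X (k+1)) i) / 2 - b i) := by
    funext i
    rw [calA_smul a ((1:ℝ)/2) (X k + X (k+1)) i, calA_add a (X k) (X (k+1)) i]
    ring
  have hdp : dp (fun i => calA a ((((1:ℝ)/2 : ℝ) : ℂ) • (X k + X (k+1))) i - b i)
        (fun i => calA a ((((1:ℝ)/2 : ℝ) : ℂ) • (X k + X (k+1))) i - b i)
      = dp (fun i => calA a (X k) i - b i) (fun i => calA a (X k) i - b i) / 2
        + dp (fun i => calA a (X (k+1)) i - b i) (fun i => calA a (X (k+1)) i - b i) / 2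
        - dp (fun i => calA a (X (k+1)) i - calA a (X k) i)
            (fun i => calA a (X (k+1)) i - calA a (X k) i) / 4 := by
    rw [hres]; exact dp_mid _ _ _
  have hretr : (((((1:ℝ)/2 : ℝ) : ℂ) • (X k + X (k+1))).trace).re
      = ((X k).trace).re / 2 + ((X (k+1)).trace).re / 2 := by
    rw [retr_smul, retr_add]; ring
  have hrip : rip ((((1:ℝ)/2 : ℝ) : ℂ) • (X k + X (k+1))) (dcaY (X k))
      = rip (X k) (dcaY (X k)) / 2 + rip (X (k+1)) (dcaY (X k)) / 2 := by
    rw [rip_smul_left, rip_add_left]; ring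
  have hl1 : matL1 ((((1:ℝ)/2 : ℝ) : ℂ) • (X k + X (k+1)))
      ≤ matL1 (X k) / 2 + matL1 (X (k+1)) / 2 := by
    rw [matL1_smul, abs_of_nonneg (by norm_num : (0:ℝ) ≤ (1:ℝ)/2)]
    have := matL1_add_le (X k) (X (k+1))
    linarith
  rw [hdp, hretr, hrip] at h1
  have hml1 := mul_le_mul_of_nonneg_left hl1 (le_of_lt hmu)
  linarith

/-- Stationarity along the ray through the minimizer. -/
lemma stationarity (a : Fin m → Fin d → ℂ) (b : Fin m → ℝ) {lam mu : ℝ}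
    (X : ℕ → Matrix (Fin d) (Fin d) ℂ) (hX : IsDCASeq a b lam mu X) (k : ℕ) :
    dp (calA a (X (k+1))) b - dp (calA a (X (k+1))) (calA a (X (k+1)))
      = Gf lam mu (X (k+1)) + lam * (frob (X (k+1)) - rip (X (k+1)) (dcaY (X k))) := by
  obtain ⟨h0, hPSD, hmin⟩ := hX
  have key : ∀ t : ℝ, 0 ≤ t →
      0 ≤ (t - 1) * (dp (calA a (X (k+1))) (calA a (X (k+1))) - dp (calA a (X (k+1))) b
            + (lam * ((X (k+1)).trace).re - lam * rip (X (k+1)) (dcaY (X k))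
              + mu * matL1 (X (k+1))))
          + (t - 1) ^ 2 / 2 * dp (calA a (X (k+1))) (calA a (X (k+1))) := by
    intro t ht
    have h1 := hmin k (((t : ℝ) : ℂ) • X (k+1)) (psd_smul ht (hPSD (k+1)))
    simp only [dcaObj_eq] at h1
    have hres : (fun i => calA a (((t:ℝ) : ℂ) • X (k+1)) i - b i)
        = (fun i => t * calA a (X (k+1)) i - b i) := by
      funext i; rw [calA_smul a t (X (k+1)) i]
    rw [hres, dp_ray, retr_smul, rip_smul_left, matL1_smul, abs_of_nonneg ht,
      dp_shift (calA a (X (k+1))) b] at h1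
    nlinarith [h1]
  set A2 := dp (calA a (X (k+1))) (calA a (X (k+1))) with hA2def
  set A1 := dp (calA a (X (k+1))) b with hA1def
  set β := lam * ((X (k+1)).trace).re - lam * rip (X (k+1)) (dcaY (X k))
      + mu * matL1 (X (k+1)) with hβdef
  have habs : ∀ ε : ℝ, 0 < ε → ε ≤ 1 → |A2 - A1 + β| ≤ ε * A2 / 2 := by
    intro ε h1 h2
    have k1 := key (1 + ε) (by linarith)
    have k2 := key (1 - ε) (by linarith)
    rw [abs_le]; constructor <;> nlinarith
  have hcst : A2 - A1 + β = 0 := by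
    have hA2 : 0 ≤ A2 := dp_self_nonneg _
    rcases eq_or_lt_of_le hA2 with h | h
    · have h3 : |A2 - A1 + β| ≤ 0 := by
        calc |A2 - A1 + β| ≤ 1 * A2 / 2 := habs 1 one_pos le_rfl
          _ = 0 := by rw [← h]; ring
      exact abs_eq_zero.mp (le_antisymm h3 (abs_nonneg _))
    · by_contra hc
      have h4 : 0 < |A2 - A1 + β| := abs_pos.mpr hc
      have h5 : 0 < min 1 (|A2 - A1 + β| / A2) := lt_min one_pos (div_pos h4 h)
      have h6 := habs _ h5 (min_le_left _ _)
      have h7 : min 1 (|A2 - A1 + β| / A2) * A2 ≤ |A2 - A1 + β| := by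
        calc min 1 (|A2 - A1 + β| / A2) * A2 ≤ (|A2 - A1 + β| / A2) * A2 :=
              mul_le_mul_of_nonneg_right (min_le_right _ _) (le_of_lt h)
          _ = |A2 - A1 + β| := div_mul_cancel₀ _ (ne_of_gt h)
      linarith
  have hGf : β = Gf lam mu (X (k+1))
      + lam * (frob (X (k+1)) - rip (X (k+1)) (dcaY (X k))) := by
    rw [hβdef, Gf]; ring
  linear_combination hGf - hcst

end DCAhelp

namespace DCAhelp
variable {d m : ℕ}

/-- slack sequence s_k -/
def sv (X : ℕ → Matrix (Fin d) (Fin d) ℂ) (k : ℕ) : ℝ :=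
  frob (X (k+1)) - rip (X (k+1)) (dcaY (X k))

/-- measurement-difference energy -/
def dv (a : Fin m → Fin d → ℂ) (X : ℕ → Matrix (Fin d) (Fin d) ℂ) (k : ℕ) : ℝ :=
  dp (fun i => calA a (X (k+1)) i - calA a (X k) i)
    (fun i => calA a (X (k+1)) i - calA a (X k) i)

/-- Lyapunov function value -/
def Fv (a : Fin m → Fin d → ℂ) (b : Fin m → ℝ) (lam mu : ℝ)
    (X : ℕ → Matrix (Fin d) (Fin d) ℂ) (k : ℕ) : ℝ :=
  (1/2) * dp (fun i => calA a (X k) i - b i) (fun i => calA a (X k) i - b i)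
    + Gf lam mu (X k)

variable (a : Fin m → Fin d → ℂ) (b : Fin m → ℝ) {lam mu : ℝ}
  (X : ℕ → Matrix (Fin d) (Fin d) ℂ)

lemma sv_nonneg (k : ℕ) : 0 ≤ sv X k := by
  rw [sv]; linarith [rip_dcaY_le (X (k+1)) (X k)]

lemma dv_nonneg (k : ℕ) : 0 ≤ dv a X k := dp_self_nonneg _

lemma Fv_step (hmu : 0 < mu) (hX : IsDCASeq a b lam mu X) (k : ℕ) :
    Fv a b lam mu X (k+1) + lam * sv X k + (1/4) * dv a X k ≤ Fv a b lam mu X k := by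
  obtain ⟨h0, hPSD, hmin⟩ := id hX
  have h1 := decrease a b hmu X hX k
  simp only [dcaObj_eq] at h1
  have e1 : rip (X k) (dcaY (X k)) = frob (X k) := rip_dcaY_self (X k)
  simp only [Fv, Gf, sv, dv]
  rw [← e1]
  linarith [h1]

lemma Fv_nonneg (hlam : 0 ≤ lam) (hmu : 0 ≤ mu) (hX : IsDCASeq a b lam mu X) (k : ℕ) :
    0 ≤ Fv a b lam mu X k := by
  obtain ⟨h0, hPSD, hmin⟩ := id hX
  have h1 := Gf_nonneg hlam hmu (hPSD k)
  have h2 := dp_self_nonneg (fun i => calA a (X k) i - b i)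
  rw [Fv]; linarith

lemma Fv_zero (hX : IsDCASeq a b lam mu X) : Fv a b lam mu X 0 = (1/2) * dp b b := by
  obtain ⟨h0, hPSD, hmin⟩ := id hX
  rw [Fv, h0, Gf_zero]
  have e1 : dp (fun i => calA a (0 : Matrix (Fin d) (Fin d) ℂ) i - b i)
      (fun i => calA a (0 : Matrix (Fin d) (Fin d) ℂ) i - b i) = dp b b := by
    simp only [dp, calA_zero]
    exact Finset.sum_congr rfl fun i _ => by ring
  rw [e1]; ring

lemma Fv_le_zeroth (hlam : 0 ≤ lam) (hmu : 0 < mu) (hX : IsDCASeq a b lam mu X) (k : ℕ) :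
    Fv a b lam mu X k ≤ Fv a b lam mu X 0 := by
  have step : ∀ n, Fv a b lam mu X (n+1) ≤ Fv a b lam mu X n := by
    intro n
    have := Fv_step a b X hmu hX n
    have h1 := sv_nonneg X n
    have h2 := dv_nonneg a X n
    nlinarith [mul_nonneg hlam h1]
  exact antitone_nat_of_succ_le step (Nat.zero_le k)

lemma frob_bound (hlam : 0 ≤ lam) (hmu : 0 < mu) (hX : IsDCASeq a b lam mu X) (k : ℕ) :
    frob (X k) ≤ dp b b / (2 * mu) := by
  obtain ⟨h0, hPSD, hmin⟩ := id hX
  have h1 : mu * frob (X k) ≤ Fv a b lam mu X k := by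
    have h2 : mu * frob (X k) ≤ mu * matL1 (X k) :=
      mul_le_mul_of_nonneg_left (frob_le_matL1 _) hmu.le
    have h3 := Gf_ge_matL1 (mu := mu) hlam (hPSD k)
    have h4 := dp_self_nonneg (fun i => calA a (X k) i - b i)
    rw [Fv]; linarith
  have h5 := (Fv_le_zeroth a b X hlam hmu hX k).trans_eq (Fv_zero a b X hX)
  rw [le_div_iff₀ (by positivity : (0:ℝ) < 2 * mu)]
  nlinarith

lemma ray_eq (hX : IsDCASeq a b lam mu X) (k : ℕ) :
    dp (calA a (X (k+1))) b - dp (calA a (X (k+1))) (calA a (X (k+1)))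
      = Gf lam mu (X (k+1)) + lam * sv X k := by
  rw [sv]; exact stationarity a b X hX k

lemma u_bound (hlam : 0 ≤ lam) (hmu : 0 < mu) (hX : IsDCASeq a b lam mu X) (k : ℕ) :
    l2 (calA a (X k)) ≤ Real.sqrt (∑ i, (∑ j, ‖a i j‖ ^ 2) ^ 2)
      * (dp b b / (2 * mu)) := by
  refine (l2_calA_le a (X k)).trans ?_
  exact mul_le_mul_of_nonneg_left (frob_bound a b X hlam hmu hX k) (Real.sqrt_nonneg _)

/-- bound on the Gf increments -/
lemma Gdiff_bound (hlam : 0 ≤ lam) (hmu : 0 < mu) (hX : IsDCASeq a b lam mu X) (k : ℕ) :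
    |Gf lam mu (X (k+2)) - Gf lam mu (X (k+1))|
      ≤ Real.sqrt (dv a X (k+1)) * (l2 b + 2 * (Real.sqrt (∑ i, (∑ j, ‖a i j‖ ^ 2) ^ 2)
          * (dp b b / (2 * mu)))) + lam * (sv X (k+1) + sv X k) := by
  have r1 := ray_eq a b X hX k
  have r2 := ray_eq a b X hX (k+1)
  have e1 : Gf lam mu (X (k+2)) - Gf lam mu (X (k+1))
      = (dp (calA a (X (k+2))) b - dp (calA a (X (k+1))) b)
        - (dp (calA a (X (k+2))) (calA a (X (k+2))) - dp (calA a (X (k+1))) (calA a (X (k+1))))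
        - lam * (sv X (k+1) - sv X k) := by linarith
  have e2 : dp (calA a (X (k+2))) b - dp (calA a (X (k+1))) b
      = dp (fun i => calA a (X (k+2)) i - calA a (X (k+1)) i) b := (dp_sub_left _ _ _).symm
  have e3 : dp (calA a (X (k+2))) (calA a (X (k+2))) - dp (calA a (X (k+1))) (calA a (X (k+1)))
      = dp (fun i => calA a (X (k+2)) i - calA a (X (k+1)) i)
          (fun i => calA a (X (k+2)) i + calA a (X (k+1)) i) := by
    exact dp_self_sub (calA a (X (k+1))) (calA a (X (k+2)))
  have hδ : l2 (fun i => calA a (X (k+2)) i - calA a (X (k+1)) i)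
      = Real.sqrt (dv a X (k+1)) := by rw [l2_eq_sqrt_dp, dv]
  have b1 : |dp (fun i => calA a (X (k+2)) i - calA a (X (k+1)) i) b|
      ≤ Real.sqrt (dv a X (k+1)) * l2 b := by rw [← hδ]; exact abs_dp_le _ _
  have b2 : |dp (fun i => calA a (X (k+2)) i - calA a (X (k+1)) i)
        (fun i => calA a (X (k+2)) i + calA a (X (k+1)) i)|
      ≤ Real.sqrt (dv a X (k+1)) * (2 * (Real.sqrt (∑ i, (∑ j, ‖a i j‖ ^ 2) ^ 2)
          * (dp b b / (2 * mu)))) := by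
    refine (abs_dp_le _ _).trans ?_
    rw [← hδ]
    refine mul_le_mul_of_nonneg_left ?_ (l2_nonneg _)
    refine (l2_add_le (calA a (X (k+2))) (calA a (X (k+1)))).trans ?_
    have u1 := u_bound a b X hlam hmu hX (k+2)
    have u2 := u_bound a b X hlam hmu hX (k+1)
    linarith
  have hs1 := sv_nonneg X k
  have hs2 := sv_nonneg X (k+1)
  rw [e1, e2, e3]
  refine (abs_sub _ _).trans ?_
  have h4 : |lam * (sv X (k+1) - sv X k)| ≤ lam * (sv X (k+1) + sv X k) := by
    rw [abs_mul, abs_of_nonneg hlam]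
    refine mul_le_mul_of_nonneg_left ?_ hlam
    rw [abs_le]; constructor <;> linarith
  have h5 := (abs_sub (dp (fun i => calA a (X (k+2)) i - calA a (X (k+1)) i) b)
    (dp (fun i => calA a (X (k+2)) i - calA a (X (k+1)) i)
      (fun i => calA a (X (k+2)) i + calA a (X (k+1)) i)))
  nlinarith [Real.sqrt_nonneg (dv a X (k+1))]

end DCAhelp

namespace DCAhelp
variable {d m : ℕ} (a : Fin m → Fin d → ℂ) (b : Fin m → ℝ) {lam mu : ℝ}
  (X : ℕ → Matrix (Fin d) (Fin d) ℂ)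

/-- per-step bound on the norm increments -/
lemma hdiff_bound (hlam : 0 < lam) (hmu : 0 < mu) (hX : IsDCASeq a b lam mu X) (k : ℕ) :
    |frob (X (k+2)) - frob (X (k+1))|
      ≤ sv X (k+1) + (|Gf lam mu (X (k+2)) - Gf lam mu (X (k+1))|
          + (lam * (Real.sqrt d + 1) + mu * d)
            * Real.sqrt (2 * (dp b b / (2 * mu)) * sv X (k+1))) / mu := by
  obtain ⟨h0, hPSD, hmin⟩ := id hX
  have hKC : 0 ≤ lam * (Real.sqrt d + 1) + mu * d :=
    add_nonneg (mul_nonneg hlam.le (by positivity)) (mul_nonneg hmu.le (Nat.cast_nonneg d))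
  have hsv : 0 ≤ sv X (k+1) := sv_nonneg X (k+1)
  have hMb0 : 0 ≤ dp b b / (2 * mu) := div_nonneg (dp_self_nonneg b) (by linarith)
  have hsqrt0 : 0 ≤ Real.sqrt (2 * (dp b b / (2 * mu)) * sv X (k+1)) := Real.sqrt_nonneg _
  have habs0 : 0 ≤ |Gf lam mu (X (k+2)) - Gf lam mu (X (k+1))| := abs_nonneg _
  by_cases hXj : X (k+1) = 0
  · have e1 : frob (X (k+1)) = 0 := by rw [hXj, frob_zero]
    have e2 : sv X (k+1) = frob (X (k+2)) := by
      rw [sv, hXj, dcaY, if_pos rfl, rip_zero_right, sub_zero]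
    rw [e1, sub_zero, abs_of_nonneg (frob_nonneg _), ← e2]
    have h3 : 0 ≤ (|Gf lam mu (X (k+2)) - Gf lam mu (X (k+1))|
        + (lam * (Real.sqrt d + 1) + mu * d)
          * Real.sqrt (2 * (dp b b / (2 * mu)) * sv X (k+1))) / mu :=
      div_nonneg (add_nonneg habs0 (mul_nonneg hKC hsqrt0)) hmu.le
    linarith
  · have hc0 : 0 ≤ rip (X (k+2)) (dcaY (X (k+1))) :=
      rip_nonneg_psd (hPSD (k+2)) (dcaY_psd (hPSD (k+1)))
    have hY1 : frob (dcaY (X (k+1))) = 1 := frob_dcaY_one hXj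
    set c := rip (X (k+2)) (dcaY (X (k+1))) with hcdef
    set W := X (k+2) - (c : ℂ) • dcaY (X (k+1)) with hWdef
    have hW2 : frob W ^ 2 = frob (X (k+2)) ^ 2 - c ^ 2 := by
      rw [hWdef, frob_sub_sq, frob_smul, rip_smul_right, hY1, abs_of_nonneg hc0]
      ring
    have hsc : c ≤ frob (X (k+2)) := rip_dcaY_le _ _
    have hb2 : frob (X (k+2)) ≤ dp b b / (2 * mu) := frob_bound a b X hlam.le hmu hX (k+2)
    have hb1 : frob (X (k+1)) ≤ dp b b / (2 * mu) := frob_bound a b X hlam.le hmu hX (k+1)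
    have hsvval : sv X (k+1) = frob (X (k+2)) - c := by rw [sv]
    have hWle : frob W ≤ Real.sqrt (2 * (dp b b / (2 * mu)) * sv X (k+1)) := by
      refine sq_le_imp_le (frob_nonneg W) hsqrt0 ?_
      rw [Real.sq_sqrt (mul_nonneg (mul_nonneg (by norm_num) hMb0) hsv)]
      rw [hW2, hsvval]
      nlinarith
    have hGhom : Gf lam mu (X (k+1)) = frob (X (k+1)) * Gf lam mu (dcaY (X (k+1))) := by
      conv_lhs => rw [← smul_dcaY (X (k+1))]
      rw [Gf_smul lam mu (frob_nonneg _)]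
    have hGlip : |Gf lam mu (X (k+2)) - c * Gf lam mu (dcaY (X (k+1)))|
        ≤ (lam * (Real.sqrt d + 1) + mu * d) * frob W := by
      have h6 := Gf_lip hlam.le hmu.le (X (k+2)) ((c : ℂ) • dcaY (X (k+1)))
      rw [Gf_smul lam mu hc0] at h6
      exact h6
    have hYge : mu ≤ Gf lam mu (dcaY (X (k+1))) := by
      have h7 := Gf_ge_matL1 (mu := mu) hlam.le (dcaY_psd (hPSD (k+1)))
      have h8 := frob_le_matL1 (dcaY (X (k+1)))
      rw [hY1] at h8
      nlinarith
    have hckey : |c - frob (X (k+1))| * mu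
        ≤ |Gf lam mu (X (k+2)) - Gf lam mu (X (k+1))|
          + (lam * (Real.sqrt d + 1) + mu * d) * frob W := by
      have e3 : (c - frob (X (k+1))) * Gf lam mu (dcaY (X (k+1)))
          = (Gf lam mu (X (k+2)) - Gf lam mu (X (k+1)))
            - (Gf lam mu (X (k+2)) - c * Gf lam mu (dcaY (X (k+1)))) := by
        rw [hGhom]; ring
      have e4 : |c - frob (X (k+1))| * Gf lam mu (dcaY (X (k+1)))
          ≤ |Gf lam mu (X (k+2)) - Gf lam mu (X (k+1))|
            + (lam * (Real.sqrt d + 1) + mu * d) * frob W := by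
        have e5 : |(c - frob (X (k+1))) * Gf lam mu (dcaY (X (k+1)))|
            ≤ |Gf lam mu (X (k+2)) - Gf lam mu (X (k+1))|
              + |Gf lam mu (X (k+2)) - c * Gf lam mu (dcaY (X (k+1)))| := by
          rw [e3]; exact abs_sub _ _
        rw [abs_mul, abs_of_nonneg (by linarith : 0 ≤ Gf lam mu (dcaY (X (k+1))))] at e5
        linarith
      calc |c - frob (X (k+1))| * mu
          ≤ |c - frob (X (k+1))| * Gf lam mu (dcaY (X (k+1))) :=
            mul_le_mul_of_nonneg_left hYge (abs_nonneg _)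
        _ ≤ _ := e4
    have e6 : frob (X (k+2)) - frob (X (k+1)) = sv X (k+1) + (c - frob (X (k+1))) := by
      rw [hsvval]; ring
    have e7 : |frob (X (k+2)) - frob (X (k+1))| ≤ sv X (k+1) + |c - frob (X (k+1))| := by
      rw [e6]
      refine (abs_add_le _ _).trans ?_
      rw [abs_of_nonneg hsv]
    have e8 : |c - frob (X (k+1))|
        ≤ (|Gf lam mu (X (k+2)) - Gf lam mu (X (k+1))|
            + (lam * (Real.sqrt d + 1) + mu * d)
              * Real.sqrt (2 * (dp b b / (2 * mu)) * sv X (k+1))) / mu := by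
      rw [le_div_iff₀ hmu]
      refine hckey.trans ?_
      have := mul_le_mul_of_nonneg_left hWle hKC
      linarith
    linarith

/-- per-step bound on the iterate differences -/
lemma final_bound (hlam : 0 < lam) (hmu : 0 < mu) (hX : IsDCASeq a b lam mu X) (k : ℕ) :
    frob (X (k+2) - X (k+1))
      ≤ |frob (X (k+2)) - frob (X (k+1))|
        + Real.sqrt (2 * (dp b b / (2 * mu)) * sv X (k+1)) := by
  obtain ⟨h0, hPSD, hmin⟩ := id hX
  have hb1 : frob (X (k+1)) ≤ dp b b / (2 * mu) := frob_bound a b X hlam.le hmu hX (k+1)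
  have hsv : 0 ≤ sv X (k+1) := sv_nonneg X (k+1)
  have idrip : rip (X (k+2)) (X (k+1))
      = frob (X (k+1)) * rip (X (k+2)) (dcaY (X (k+1))) := by
    conv_lhs => rw [← smul_dcaY (X (k+1))]
    rw [rip_smul_right]
  have idsq : frob (X (k+2) - X (k+1)) ^ 2
      = (frob (X (k+2)) - frob (X (k+1))) ^ 2 + 2 * frob (X (k+1)) * sv X (k+1) := by
    rw [frob_sub_sq, idrip, sv]; ring
  refine sq_le_imp_le (frob_nonneg _) (add_nonneg (abs_nonneg _) (Real.sqrt_nonneg _)) ?_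
  rw [idsq]
  have hMb0 : 0 ≤ dp b b / (2 * mu) := div_nonneg (dp_self_nonneg b) (by linarith)
  have hsq := Real.sq_sqrt (mul_nonneg (mul_nonneg (by norm_num : (0:ℝ) ≤ 2) hMb0) hsv)
  have hfb : frob (X (k+1)) * sv X (k+1) ≤ (dp b b / (2 * mu)) * sv X (k+1) :=
    mul_le_mul_of_nonneg_right hb1 hsv
  nlinarith [abs_nonneg (frob (X (k+2)) - frob (X (k+1))), Real.sqrt_nonneg
    (2 * (dp b b / (2 * mu)) * sv X (k+1)), sq_abs (frob (X (k+2)) - frob (X (k+1)))]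

end DCAhelp

/-- Successive DCA iterates converge to each other: ‖X^{k+1} − X^k‖_F → 0. -/
theorem dca_successive_differences_vanish {d m : ℕ} (a : Fin m → Fin d → ℂ)
    (b : Fin m → ℝ) (lam mu : ℝ) (hlam : 0 < lam) (hmu : 0 < mu)
    (X : ℕ → Matrix (Fin d) (Fin d) ℂ) (hX : IsDCASeq a b lam mu X) :
    Filter.Tendsto (fun k => frob (X (k + 1) - X k)) Filter.atTop (nhds 0) := by
  classical
  obtain ⟨h0, hPSD, hmin⟩ := id hX
  have hstep := fun k => DCAhelp.Fv_step a b X hmu hX k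
  have hs0 := fun k => DCAhelp.sv_nonneg X k
  have hd0 := fun k => DCAhelp.dv_nonneg a X k
  have hanti : ∀ k, DCAhelp.Fv a b lam mu X (k+1) ≤ DCAhelp.Fv a b lam mu X k := by
    intro k
    have h1 := hstep k; have h2 := hs0 k; have h3 := hd0 k
    nlinarith [mul_nonneg hlam.le h2]
  have hmono : Antitone (DCAhelp.Fv a b lam mu X) := antitone_nat_of_succ_le hanti
  have hbdd : BddBelow (Set.range (DCAhelp.Fv a b lam mu X)) := by
    refine ⟨0, ?_⟩
    rintro x ⟨k, rfl⟩
    exact DCAhelp.Fv_nonneg a b X hlam.le hmu.le hX k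
  have hlim := tendsto_atTop_ciInf hmono hbdd
  have hlims : Filter.Tendsto (fun k => DCAhelp.Fv a b lam mu X (k+1)) Filter.atTop
      (nhds (⨅ k, DCAhelp.Fv a b lam mu X k)) :=
    hlim.comp (Filter.tendsto_add_atTop_nat 1)
  have hdiff0 : Filter.Tendsto
      (fun k => DCAhelp.Fv a b lam mu X k - DCAhelp.Fv a b lam mu X (k+1))
      Filter.atTop (nhds 0) := by
    have := hlim.sub hlims
    simpa using this
  have hsten : Filter.Tendsto (fun k => DCAhelp.sv X k) Filter.atTop (nhds 0) := by
    refine squeeze_zero (g := fun k =>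
      (DCAhelp.Fv a b lam mu X k - DCAhelp.Fv a b lam mu X (k+1)) * (1/lam))
      hs0 (fun k => ?_) ?_
    · show DCAhelp.sv X k
        ≤ (DCAhelp.Fv a b lam mu X k - DCAhelp.Fv a b lam mu X (k+1)) * (1/lam)
      have h1 := hstep k; have h3 := hd0 k
      have h4 : lam * DCAhelp.sv X k
          ≤ DCAhelp.Fv a b lam mu X k - DCAhelp.Fv a b lam mu X (k+1) := by linarith
      calc DCAhelp.sv X k = (lam * DCAhelp.sv X k) * (1/lam) := by field_simp
        _ ≤ _ := mul_le_mul_of_nonneg_right h4 (by positivity)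
    · simpa using hdiff0.mul_const (1/lam)
  have hdten : Filter.Tendsto (fun k => DCAhelp.dv a X k) Filter.atTop (nhds 0) := by
    refine squeeze_zero (g := fun k =>
      (DCAhelp.Fv a b lam mu X k - DCAhelp.Fv a b lam mu X (k+1)) * 4)
      hd0 (fun k => ?_) ?_
    · show DCAhelp.dv a X k
        ≤ (DCAhelp.Fv a b lam mu X k - DCAhelp.Fv a b lam mu X (k+1)) * 4
      have h1 := hstep k
      nlinarith [mul_nonneg hlam.le (hs0 k)]
    · simpa using hdiff0.mul_const 4
  have hsqrtdv : Filter.Tendsto (fun k => Real.sqrt (DCAhelp.dv a X (k+1)))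
      Filter.atTop (nhds 0) := by
    have h1 : Filter.Tendsto (fun k => DCAhelp.dv a X (k+1)) Filter.atTop (nhds 0) :=
      hdten.comp (Filter.tendsto_add_atTop_nat 1)
    have h2 := (Real.continuous_sqrt.tendsto 0).comp h1
    simpa [Function.comp_def] using h2
  have hsshift : Filter.Tendsto (fun k => DCAhelp.sv X (k+1)) Filter.atTop (nhds 0) :=
    hsten.comp (Filter.tendsto_add_atTop_nat 1)
  have hGdiffT : Filter.Tendsto
      (fun k => DCAhelp.Gf lam mu (X (k+2)) - DCAhelp.Gf lam mu (X (k+1)))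
      Filter.atTop (nhds 0) := by
    refine squeeze_zero_norm
      (fun k => by simpa [Real.norm_eq_abs] using DCAhelp.Gdiff_bound a b X hlam.le hmu hX k) ?_
    have h4 := hsqrtdv.mul_const
      (l2 b + 2 * (Real.sqrt (∑ i, (∑ j, ‖a i j‖ ^ 2) ^ 2)
        * (DCAhelp.dp b b / (2 * mu))))
    have h5 := (hsshift.add hsten).const_mul lam
    simpa using h4.add h5
  have hsqrts : Filter.Tendsto
      (fun k => Real.sqrt (2 * (DCAhelp.dp b b / (2 * mu)) * DCAhelp.sv X (k+1)))
      Filter.atTop (nhds 0) := by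
    have h1 : Filter.Tendsto
        (fun k => 2 * (DCAhelp.dp b b / (2 * mu)) * DCAhelp.sv X (k+1))
        Filter.atTop (nhds 0) := by
      simpa using hsshift.const_mul (2 * (DCAhelp.dp b b / (2 * mu)))
    have h2 := (Real.continuous_sqrt.tendsto 0).comp h1
    simpa [Function.comp_def] using h2
  have hhdiffT : Filter.Tendsto (fun k => frob (X (k+2)) - frob (X (k+1)))
      Filter.atTop (nhds 0) := by
    refine squeeze_zero_norm
      (fun k => by simpa [Real.norm_eq_abs] using DCAhelp.hdiff_bound a b X hlam hmu hX k) ?_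
    have h6 := (hGdiffT.abs.add
      (hsqrts.const_mul (lam * (Real.sqrt d + 1) + mu * d))).div_const mu
    have h7 := hsshift.add h6
    simpa using h7
  have hfinal : Filter.Tendsto (fun k => frob (X (k+2) - X (k+1))) Filter.atTop (nhds 0) := by
    refine squeeze_zero (fun k => DCAhelp.frob_nonneg _)
      (fun k => DCAhelp.final_bound a b X hlam hmu hX k) ?_
    have := hhdiffT.abs.add hsqrts
    simpa using this
  have hfinal' : Filter.Tendsto (fun k => frob (X (k+1+1) - X (k+1))) Filter.atTop (nhds 0) :=
    hfinal
  exact (Filter.tendsto_add_atTop_iff_nat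
    (f := fun k => frob (X (k + 1) - X k)) 1).mp hfinal'
end
end

section
/- Let x0 ∈ ℂ^d with support T0 = {j : (x0)_j ≠ 0}, let X0 = x0 x0*, w ∈ ℝ^m, b = 𝒜(X0) + w, and μ ≥ 0. Let X# be a Hermitian matrix with μ‖X#‖_1 + (1/2)‖𝒜(X#) − b‖_2² ≤ μ‖X0‖_1 + (1/2)‖𝒜(X0) − b‖_2², and set H = X# − X0. Then μ‖H − H_{T0,T0}‖_1 ≤ μ‖H_{T0,T0}‖_1 + ‖w‖_2·‖𝒜(H)‖_2 − (1/2)‖𝒜(H)‖_2², where H_{T0,T0} denotes the matrix that agrees with H on entries (i,j) with i ∈ T0 and j ∈ T0 and is zero elsewhere. -/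
open Matrix BigOperators
open scoped ComplexOrder

noncomputable section

/-- Inequality (3.1): μ‖H − H_{T₀,T₀}‖₁ ≤ μ‖H_{T₀,T₀}‖₁ + ‖w‖₂‖𝒜(H)‖₂ − (1/2)‖𝒜(H)‖₂². -/
theorem cone_constraint_inequality {d m : ℕ} (a : Fin m → Fin d → ℂ)
    (x0 : Fin d → ℂ) (w b : Fin m → ℝ)
    (hb : ∀ i, b i = calA a (vecMulVec x0 (star x0)) i + w i)
    (mu : ℝ) (hmu : 0 ≤ mu)
    (Xs : Matrix (Fin d) (Fin d) ℂ) (hXs : Xs.IsHermitian)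
    (hle : mu * matL1 Xs + (1/2) * (l2 (fun i => calA a Xs i - b i)) ^ 2 ≤
        mu * matL1 (vecMulVec x0 (star x0))
          + (1/2) * (l2 (fun i => calA a (vecMulVec x0 (star x0)) i - b i)) ^ 2)
    (H : Matrix (Fin d) (Fin d) ℂ) (hH : H = Xs - vecMulVec x0 (star x0))
    (HT : Matrix (Fin d) (Fin d) ℂ)
    (hHT : ∀ i j, HT i j = if x0 i ≠ 0 ∧ x0 j ≠ 0 then H i j else 0) :
    mu * matL1 (H - HT) ≤
      mu * matL1 HT + l2 w * l2 (calA a H) - (1/2) * (l2 (calA a H)) ^ 2 := by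

  set X0 := vecMulVec x0 (star x0) with hX0
  have hXs' : Xs = X0 + H := by rw [hH]; abel
  have hA : ∀ i, calA a Xs i = calA a X0 i + calA a H i := by
    intro i
    simp [calA, hXs', add_mulVec, dotProduct_add, Complex.add_re]
  set A := calA a H with hAdef
  have hsq : ∀ (v : Fin m → ℝ), (l2 v) ^ 2 = ∑ i, (v i) ^ 2 := by
    intro v
    rw [l2, Real.sq_sqrt]
    positivity
  have hleft : (l2 (fun i => calA a Xs i - b i)) ^ 2 = ∑ i, (A i - w i) ^ 2 := by
    rw [hsq]
    apply Finset.sum_congr rfl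
    intro i _
    rw [hA, hb]; ring
  have hright : (l2 (fun i => calA a X0 i - b i)) ^ 2 = ∑ i, (w i) ^ 2 := by
    rw [hsq]
    apply Finset.sum_congr rfl
    intro i _
    rw [hb]; ring
  rw [hleft, hright] at hle
  have hexp : ∑ i, (A i - w i) ^ 2 = ∑ i, (A i) ^ 2 - 2 * ∑ i, A i * w i + ∑ i, (w i) ^ 2 := by
    rw [Finset.mul_sum, ← Finset.sum_sub_distrib, ← Finset.sum_add_distrib]
    apply Finset.sum_congr rfl
    intro i _; ring
  -- Cauchy-Schwarz
  have hcs : ∑ i, A i * w i ≤ l2 w * l2 A := by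
    calc ∑ i, A i * w i = ∑ i, w i * A i := by
          apply Finset.sum_congr rfl; intro i _; ring
      _ ≤ Real.sqrt (∑ i, (w i) ^ 2) * Real.sqrt (∑ i, (A i) ^ 2) :=
          Real.sum_mul_le_sqrt_mul_sqrt Finset.univ w A
      _ = l2 w * l2 A := rfl
  -- entrywise L1 inequality
  have hentry : ∀ i j, ‖X0 i j‖ + ‖(H - HT) i j‖ ≤
      ‖Xs i j‖ + ‖HT i j‖ := by
    intro i j
    have hXe : Xs i j = X0 i j + H i j := by rw [hXs']; simp [Matrix.add_apply]
    by_cases h : x0 i ≠ 0 ∧ x0 j ≠ 0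
    · have h1 : HT i j = H i j := by rw [hHT]; simp [h]
      have h2 : (H - HT) i j = 0 := by simp [Matrix.sub_apply, h1]
      have h3 : X0 i j = Xs i j - HT i j := by rw [hXe, h1]; ring
      rw [h2, h3]
      simp only [norm_zero]
      linarith [norm_sub_le (Xs i j) (HT i j)]
    · have h1 : HT i j = 0 := by rw [hHT]; simp [h]
      have hX00 : X0 i j = 0 := by
        rw [hX0, vecMulVec_apply]
        rcases not_and_or.mp h with h' | h' <;> push_neg at h' <;> simp [h']
      have h2 : (H - HT) i j = Xs i j := by
        simp [Matrix.sub_apply, h1, hXe, hX00]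
      rw [h1, h2, hX00]
      simp
  have hL1 : matL1 X0 + matL1 (H - HT) ≤ matL1 Xs + matL1 HT := by
    simp only [matL1, ← Finset.sum_add_distrib]
    exact Finset.sum_le_sum fun i _ => Finset.sum_le_sum fun j _ => hentry i j
  have hmul := mul_le_mul_of_nonneg_left hL1 hmu
  have hAsq : (l2 A) ^ 2 = ∑ i, (A i) ^ 2 := hsq A
  nlinarith [hmul, hle, hcs, hexp, hAsq]
end
end
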